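/- arXiv:2605.30946 — 8 statements merged into one kernel-verified Lean document; each statement's English description precedes it below -/
import Mathlib

section
/- Let g satisfy condition (g) and set f = e^g. Then ∫₀^∞ ds/f(s) < ∞ (so F(u) = ∫_u^∞ ds/f(s) is finite for every u ≥ 0), and moreover lim_{u→∞} f'(u)·F(u) = 1 and lim_{u→∞} f'(u)²/(f(u)·f''(u)) = 1. -/
open Set Filter MeasureTheory


/-- One-sided derivative on `[0, ∞)`. -/
noncomputable def dIci (g : ℝ → ℝ) : ℝ → ℝ := derivWithin g (Set.Ici 0)

/-- Condition (g): `g ∈ C³([0,∞))` with `g' > 0`, `g'' > 0`, `g'² - g'' ≥ 0`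
and `2 g''² - g' g''' > 0` on `[0, ∞)`. -/
def ConditionG (g : ℝ → ℝ) : Prop :=
  ContDiffOn ℝ 3 g (Set.Ici 0) ∧
  ∀ u : ℝ, 0 ≤ u →
    0 < dIci g u ∧
    0 < dIci (dIci g) u ∧
    0 ≤ (dIci g u) ^ 2 - dIci (dIci g) u ∧
    0 < 2 * (dIci (dIci g) u) ^ 2 - dIci g u * dIci (dIci (dIci g)) u

/-- `F(u) = ∫_u^∞ ds / f(s)`. -/
noncomputable def Fint (f : ℝ → ℝ) (u : ℝ) : ℝ := ∫ s in Set.Ioi u, (f s)⁻¹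

/-- If `g` satisfies condition (g) and `f = e^g`, then `1/f` is integrable on
`(0,∞)`, and `f'(u) F(u) → 1` and `f'(u)² / (f(u) f''(u)) → 1` as `u → ∞`. -/
theorem limits_of_exp_g
    (g : ℝ → ℝ) (hg : ConditionG g)
    (f : ℝ → ℝ) (hf : ∀ u : ℝ, f u = Real.exp (g u)) :
    MeasureTheory.IntegrableOn (fun s => (f s)⁻¹) (Set.Ioi 0) ∧
    Filter.Tendsto (fun u => dIci f u * Fint f u) Filter.atTop (nhds 1) ∧
    Filter.Tendsto (fun u => (dIci f u) ^ 2 / (f u * dIci (dIci f) u))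
      Filter.atTop (nhds 1) := by
  obtain ⟨hC, hcond⟩ := hg
  set G1 := dIci g with hG1def
  set G2 := dIci (dIci g) with hG2def
  set G3 := dIci (dIci (dIci g)) with hG3def
  have hC1 : ContDiffOn ℝ 2 G1 (Set.Ici 0) := hC.derivWithin (uniqueDiffOn_Ici 0) (by norm_num)
  have hC2 : ContDiffOn ℝ 1 G2 (Set.Ici 0) := hC1.derivWithin (uniqueDiffOn_Ici 0) (by norm_num)
  have hmem : ∀ u : ℝ, 0 < u → Set.Ici (0:ℝ) ∈ nhds u := fun u hu => Ici_mem_nhds hu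
  have hG1pos : ∀ u : ℝ, 0 ≤ u → 0 < G1 u := fun u hu => (hcond u hu).1
  have hG2pos : ∀ u : ℝ, 0 ≤ u → 0 < G2 u := fun u hu => (hcond u hu).2.1
  have hlast : ∀ u : ℝ, 0 ≤ u → 0 < 2 * (G2 u)^2 - G1 u * G3 u := fun u hu => (hcond u hu).2.2.2
  -- derivative facts
  have hDg : ∀ u : ℝ, 0 < u → HasDerivAt g (G1 u) u := by
    intro u hu
    have h1 : DifferentiableWithinAt ℝ g (Set.Ici 0) u :=
      (hC.differentiableOn (by norm_num)) u hu.le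
    have h2 := h1.differentiableAt (hmem u hu)
    have h3 : G1 u = deriv g u := derivWithin_of_mem_nhds (hmem u hu)
    rw [h3]; exact h2.hasDerivAt
  have hDG1 : ∀ u : ℝ, 0 < u → HasDerivAt G1 (G2 u) u := by
    intro u hu
    have h1 : DifferentiableWithinAt ℝ G1 (Set.Ici 0) u :=
      (hC1.differentiableOn (by norm_num)) u hu.le
    have h2 := h1.differentiableAt (hmem u hu)
    have h3 : G2 u = deriv G1 u := derivWithin_of_mem_nhds (hmem u hu)
    rw [h3]; exact h2.hasDerivAt
  have hDG2 : ∀ u : ℝ, 0 < u → HasDerivAt G2 (G3 u) u := by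
    intro u hu
    have h1 : DifferentiableWithinAt ℝ G2 (Set.Ici 0) u :=
      (hC2.differentiableOn (by norm_num)) u hu.le
    have h2 := h1.differentiableAt (hmem u hu)
    have h3 : G3 u = deriv G2 u := derivWithin_of_mem_nhds (hmem u hu)
    rw [h3]; exact h2.hasDerivAt
  have contg : ContinuousOn g (Set.Ici 0) := hC.continuousOn
  have contG1 : ContinuousOn G1 (Set.Ici 0) := hC1.continuousOn
  have contG2 : ContinuousOn G2 (Set.Ici 0) := hC2.continuousOn
  -- G1 monotone on Ici 0
  have hG1mono : MonotoneOn G1 (Set.Ici 0) := by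
    apply monotoneOn_of_deriv_nonneg (convex_Ici 0) contG1
    · intro x hx
      rw [interior_Ici] at hx
      exact ((hDG1 x hx).differentiableAt).differentiableWithinAt
    · intro x hx
      rw [interior_Ici] at hx
      rw [(hDG1 x hx).deriv]
      exact (hG2pos x hx.le).le
  -- g lower bound
  set c := G1 0 with hc
  have hcpos : 0 < c := hG1pos 0 le_rfl
  have hglb : ∀ u : ℝ, 0 ≤ u → g 0 + c * u ≤ g u := by
    intro u hu
    have hmon : MonotoneOn (fun v => g v - c * v) (Set.Ici 0) := by
      apply monotoneOn_of_deriv_nonneg (convex_Ici 0)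
      · exact contg.sub (continuousOn_const.mul continuousOn_id)
      · intro x hx
        rw [interior_Ici] at hx
        have hd : HasDerivAt (fun v => g v - c * v) (G1 x - c * 1) x :=
          (hDg x hx).sub ((hasDerivAt_id x).const_mul c)
        exact hd.differentiableAt.differentiableWithinAt
      · intro x hx
        rw [interior_Ici] at hx
        have hd : HasDerivAt (fun v => g v - c * v) (G1 x - c * 1) x :=
          (hDg x hx).sub ((hasDerivAt_id x).const_mul c)
        rw [hd.deriv]
        have := hG1mono (self_mem_Ici) (mem_Ici.2 hx.le) hx.le
        simpa using this
    have := hmon self_mem_Ici (mem_Ici.2 hu) hu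
    simp only at this
    linarith
  -- integrability of exp(-g) on Ioi 0
  have hcontexp : ContinuousOn (fun s => Real.exp (-g s)) (Set.Ici 0) :=
    (Real.continuous_exp.comp_continuousOn contg.neg)
  have hint : MeasureTheory.IntegrableOn (fun s => Real.exp (-g s)) (Set.Ioi 0) := by
    apply MeasureTheory.Integrable.mono'
      ((exp_neg_integrableOn_Ioi 0 hcpos).const_mul (Real.exp (-g 0)))
    · exact (hcontexp.mono (Ioi_subset_Ici le_rfl)).aestronglyMeasurable measurableSet_Ioi
    · rw [MeasureTheory.ae_restrict_iff' measurableSet_Ioi]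
      filter_upwards with s hs
      have h1 := hglb s hs.le
      rw [Real.norm_eq_abs, abs_of_pos (Real.exp_pos _), ← Real.exp_add]
      exact Real.exp_le_exp.2 (by linarith)
  have hfinv : (fun s => (f s)⁻¹) = fun s => Real.exp (-g s) := by
    funext s; rw [hf, ← Real.exp_neg]
  -- the ratio H = g''/g'^2
  set H : ℝ → ℝ := fun u => G2 u / (G1 u) ^ 2 with hHdef
  have hHpos : ∀ u : ℝ, 0 ≤ u → 0 < H u := fun u hu =>
    div_pos (hG2pos u hu) (pow_pos (hG1pos u hu) 2)
  have hDH : ∀ u : ℝ, 0 < u →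
      HasDerivAt H ((G3 u * (G1 u)^2 - G2 u * (2 * G1 u ^ 1 * G2 u)) / ((G1 u)^2)^2) u := by
    intro u hu
    exact (hDG2 u hu).div ((hDG1 u hu).pow 2) (pow_ne_zero 2 (hG1pos u hu.le).ne')
  have hHanti : AntitoneOn H (Set.Ici 0) := by
    apply antitoneOn_of_deriv_nonpos (convex_Ici 0)
    · exact contG2.div (contG1.pow 2) (fun x hx => pow_ne_zero 2 (hG1pos x hx).ne')
    · intro x hx
      rw [interior_Ici] at hx
      exact (hDH x hx).differentiableAt.differentiableWithinAt
    · intro x hx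
      rw [interior_Ici] at hx
      rw [(hDH x hx).deriv]
      apply div_nonpos_of_nonpos_of_nonneg _ (by positivity)
      nlinarith [hlast x hx.le, hG1pos x hx.le, hG2pos x hx.le]
  -- H tends to 0
  have hHsmall : ∀ ε : ℝ, 0 < ε → ∃ u₀ : ℝ, 0 ≤ u₀ ∧ H u₀ < ε := by
    intro ε hε
    by_contra hcon
    push_neg at hcon
    -- then -(G1)⁻¹ - ε u is monotone on Ici 0
    have hmon : MonotoneOn (fun v => -(G1 v)⁻¹ - ε * v) (Set.Ici 0) := by
      apply monotoneOn_of_deriv_nonneg (convex_Ici 0)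
      · exact (contG1.inv₀ (fun x hx => (hG1pos x hx).ne')).neg.sub
          (continuousOn_const.mul continuousOn_id)
      · intro x hx
        rw [interior_Ici] at hx
        have hd : HasDerivAt (fun v => -(G1 v)⁻¹ - ε * v)
            (-(-(G2 x) / (G1 x)^2) - ε * 1) x :=
          (((hDG1 x hx).inv (hG1pos x hx.le).ne').neg).sub ((hasDerivAt_id x).const_mul ε)
        exact hd.differentiableAt.differentiableWithinAt
      · intro x hx
        rw [interior_Ici] at hx
        have hd : HasDerivAt (fun v => -(G1 v)⁻¹ - ε * v)
            (-(-(G2 x) / (G1 x)^2) - ε * 1) x :=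
          (((hDG1 x hx).inv (hG1pos x hx.le).ne').neg).sub ((hasDerivAt_id x).const_mul ε)
        rw [hd.deriv]
        have h3 : ε ≤ G2 x / G1 x ^ 2 := hcon x hx.le
        have h2 : -(-G2 x / G1 x ^ 2) - ε * 1 = G2 x / G1 x ^ 2 - ε := by ring
        rw [h2]
        linarith
    set u1 : ℝ := (c⁻¹ + 1) / ε with hu1
    have hu1pos : 0 < u1 := by positivity
    have := hmon self_mem_Ici (mem_Ici.2 hu1pos.le) hu1pos.le
    simp only at this
    have hεu1 : ε * u1 = c⁻¹ + 1 := by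
      rw [hu1]; field_simp
    have hG1u1 : 0 < (G1 u1)⁻¹ := inv_pos.2 (hG1pos u1 hu1pos.le)
    have hc' : (G1 0)⁻¹ = c⁻¹ := by rw [hc]
    linarith [this, hεu1, hG1u1, hc']
  have hHtend : Filter.Tendsto H Filter.atTop (nhds 0) := by
    rw [Metric.tendsto_atTop]
    intro ε hε
    obtain ⟨u₀, hu₀, hHu₀⟩ := hHsmall ε hε
    refine ⟨u₀, fun u hu => ?_⟩
    have h0u : (0:ℝ) ≤ u := le_trans hu₀ hu
    rw [Real.dist_eq, sub_zero, abs_of_pos (hHpos u h0u)]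
    exact lt_of_le_of_lt (hHanti (mem_Ici.2 hu₀) (mem_Ici.2 h0u) hu) hHu₀
  -- boundary term tends to 0
  have hΦtend : Filter.Tendsto (fun u => Real.exp (-g u) * (G1 u)⁻¹) Filter.atTop (nhds 0) := by
    have hup : Filter.Tendsto (fun u => Real.exp (-g 0) * Real.exp (-(c * u)) * c⁻¹)
        Filter.atTop (nhds 0) := by
      have h1 : Filter.Tendsto (fun u : ℝ => c * u) Filter.atTop Filter.atTop :=
        Filter.Tendsto.const_mul_atTop hcpos Filter.tendsto_id
      have h2 := Real.tendsto_exp_neg_atTop_nhds_zero.comp h1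
      have h3 := (h2.const_mul (Real.exp (-g 0))).mul_const (c⁻¹)
      simpa using h3
    apply tendsto_of_tendsto_of_tendsto_of_le_of_le' tendsto_const_nhds hup
    · filter_upwards [Filter.eventually_ge_atTop (0:ℝ)] with u hu
      exact le_of_lt (mul_pos (Real.exp_pos _) (inv_pos.2 (hG1pos u hu)))
    · filter_upwards [Filter.eventually_ge_atTop (0:ℝ)] with u hu
      have h1 : Real.exp (-g u) ≤ Real.exp (-g 0) * Real.exp (-(c*u)) := by
        rw [← Real.exp_add]
        exact Real.exp_le_exp.2 (by linarith [hglb u hu])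
      have h2 : (G1 u)⁻¹ ≤ c⁻¹ := by
        apply inv_anti₀ hcpos
        exact hG1mono self_mem_Ici (mem_Ici.2 hu) hu
      have h3 : 0 < (G1 u)⁻¹ := inv_pos.2 (hG1pos u hu)
      calc Real.exp (-g u) * (G1 u)⁻¹ ≤ (Real.exp (-g 0) * Real.exp (-(c*u))) * (G1 u)⁻¹ :=
            mul_le_mul_of_nonneg_right h1 h3.le
        _ ≤ Real.exp (-g 0) * Real.exp (-(c*u)) * c⁻¹ :=
            mul_le_mul_of_nonneg_left h2 (by positivity)
  have hFint_eq : ∀ u : ℝ, Fint f u = ∫ s in Set.Ioi u, Real.exp (-g s) := by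
    intro u; rw [Fint, hfinv]
  have hintO : ∀ u : ℝ, 0 ≤ u → MeasureTheory.IntegrableOn (fun s => Real.exp (-g s)) (Set.Ioi u) :=
    fun u hu => hint.mono_set (Ioi_subset_Ioi hu)
  have hcontH : ContinuousOn H (Set.Ici 0) :=
    contG2.div (contG1.pow 2) (fun x hx => pow_ne_zero 2 (hG1pos x hx).ne')
  have hintH : ∀ u : ℝ, 0 < u →
      MeasureTheory.IntegrableOn (fun s => Real.exp (-g s) * H s) (Set.Ioi u) := by
    intro u hu
    have hsub : Set.Ioi u ⊆ Set.Ici (0:ℝ) := fun x hx => le_of_lt (lt_trans hu hx)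
    apply MeasureTheory.Integrable.mono' ((hintO u hu.le).const_mul (H u))
    · exact ((hcontexp.mono hsub).mul (hcontH.mono hsub)).aestronglyMeasurable measurableSet_Ioi
    · rw [MeasureTheory.ae_restrict_iff' measurableSet_Ioi]
      filter_upwards with s hs
      have hs0 : (0:ℝ) ≤ s := le_of_lt (lt_trans hu hs)
      rw [Real.norm_eq_abs, abs_of_pos (mul_pos (Real.exp_pos _) (hHpos s hs0)), mul_comm]
      exact mul_le_mul_of_nonneg_right
        (hHanti (mem_Ici.2 hu.le) (mem_Ici.2 hs0) (le_of_lt hs)) (Real.exp_pos _).le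
  -- integration by parts identity
  have idty : ∀ u : ℝ, 0 < u →
      Fint f u + (∫ s in Set.Ioi u, Real.exp (-g s) * H s) = Real.exp (-g u) * (G1 u)⁻¹ := by
    intro u hu
    have hΦd : ∀ x : ℝ, 0 < x → HasDerivAt (fun s => -(Real.exp (-g s) * (G1 s)⁻¹))
        (Real.exp (-g x) + Real.exp (-g x) * H x) x := by
      intro x hx
      have h1 : HasDerivAt (fun s => Real.exp (-g s)) (Real.exp (-g x) * (-G1 x)) x :=
        ((hDg x hx).neg).exp
      have h2 : HasDerivAt (fun s : ℝ => (G1 s)⁻¹) (-(G2 x) / (G1 x)^2) x :=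
        (hDG1 x hx).inv (hG1pos x hx.le).ne'
      have h3 : HasDerivAt (fun s => -(Real.exp (-g s) * (G1 s)⁻¹))
          (-(Real.exp (-g x) * -G1 x * (G1 x)⁻¹ + Real.exp (-g x) * (-G2 x / G1 x ^ 2))) x :=
        (h1.mul h2).neg
      convert h3 using 1
      have hne : G1 x ≠ 0 := (hG1pos x hx.le).ne'
      simp only [hHdef]
      field_simp
      ring
    have hid := integral_Ioi_of_hasDerivAt_of_tendsto
      (f := fun s => -(Real.exp (-g s) * (G1 s)⁻¹))
      (f' := fun s => Real.exp (-g s) + Real.exp (-g s) * H s) (a := u) (m := 0)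
      ((hΦd u hu).continuousAt.continuousWithinAt)
      (fun x hx => hΦd x (lt_trans hu hx))
      (by
        apply (hintO u hu.le).add (hintH u hu))
      (by simpa using hΦtend.neg)
    rw [MeasureTheory.integral_add (hintO u hu.le) (hintH u hu)] at hid
    rw [hFint_eq]
    linarith [hid]
  -- values of dIci f
  have hfun : f = fun s => Real.exp (g s) := funext hf
  have hdf : ∀ u : ℝ, 0 < u → dIci f u = Real.exp (g u) * G1 u := by
    intro u hu
    have h0 : dIci f u = deriv f u := derivWithin_of_mem_nhds (hmem u hu)
    rw [h0, hfun]
    exact ((hDg u hu).exp).deriv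
  have hdf2 : ∀ u : ℝ, 0 < u → dIci (dIci f) u = Real.exp (g u) * ((G1 u)^2 + G2 u) := by
    intro u hu
    have h0 : dIci (dIci f) u = deriv (dIci f) u := derivWithin_of_mem_nhds (hmem u hu)
    have heq : (dIci f) =ᶠ[nhds u] fun s => Real.exp (g s) * G1 s := by
      filter_upwards [Ioi_mem_nhds hu] with s hs using hdf s hs
    have hψ : HasDerivAt (fun s => Real.exp (g s) * G1 s)
        (Real.exp (g u) * G1 u * G1 u + Real.exp (g u) * G2 u) u :=
      ((hDg u hu).exp).mul (hDG1 u hu)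
    rw [h0, heq.deriv_eq, hψ.deriv]
    ring
  -- bounds on the error integral
  have hI0 : ∀ u : ℝ, 0 < u → 0 ≤ ∫ s in Set.Ioi u, Real.exp (-g s) * H s := by
    intro u hu
    apply MeasureTheory.setIntegral_nonneg measurableSet_Ioi
    intro x hx
    have hx0 : (0:ℝ) ≤ x := le_of_lt (lt_trans hu hx)
    exact mul_nonneg (Real.exp_pos _).le (hHpos x hx0).le
  have hIH : ∀ u : ℝ, 0 < u → (∫ s in Set.Ioi u, Real.exp (-g s) * H s) ≤ H u * Fint f u := by
    intro u hu
    rw [hFint_eq, ← MeasureTheory.integral_const_mul (H u) _]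
    apply MeasureTheory.setIntegral_mono_on (hintH u hu) ((hintO u hu.le).const_mul (H u))
      measurableSet_Ioi
    intro x hx
    have hx0 : (0:ℝ) ≤ x := le_of_lt (lt_trans hu hx)
    rw [mul_comm]
    exact mul_le_mul_of_nonneg_right
      (hHanti (mem_Ici.2 hu.le) (mem_Ici.2 hx0) (le_of_lt hx)) (Real.exp_pos _).le
  -- key bounds for the product f' F
  have hbounds : ∀ u : ℝ, 0 < u →
      1 - H u ≤ dIci f u * Fint f u ∧ dIci f u * Fint f u ≤ 1 := by
    intro u hu
    set A := Real.exp (g u) * G1 u with hA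
    set Fv := Fint f u with hFv
    set I := ∫ s in Set.Ioi u, Real.exp (-g s) * H s with hI
    have hApos : 0 < A := mul_pos (Real.exp_pos _) (hG1pos u hu.le)
    have hAE : A * (Real.exp (-g u) * (G1 u)⁻¹) = 1 := by
      rw [hA, Real.exp_neg]
      field_simp
      exact div_self (hG1pos u hu.le).ne'
    have h1 : A * Fv + A * I = 1 := by
      have := idty u hu
      calc A * Fv + A * I = A * (Fv + I) := by ring
        _ = A * (Real.exp (-g u) * (G1 u)⁻¹) := by rw [this]
        _ = 1 := hAE
    have h2 : A * I ≤ A * (H u * Fv) := mul_le_mul_of_nonneg_left (hIH u hu) hApos.le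
    have h3 : 0 ≤ A * I := mul_nonneg hApos.le (hI0 u hu)
    have h5 : A * Fv ≤ 1 := by linarith
    have h6 : H u * (A * Fv) ≤ H u * 1 := mul_le_mul_of_nonneg_left h5 (hHpos u hu.le).le
    have h4 : A * (H u * Fv) = H u * (A * Fv) := by ring
    rw [hdf u hu]
    constructor <;> nlinarith [h1, h2, h3, h4, h6]
  -- the three conclusions
  refine ⟨by rw [hfinv]; exact hint, ?_, ?_⟩
  · have hlow : Filter.Tendsto (fun u => 1 - H u) Filter.atTop (nhds 1) := by
      have := (tendsto_const_nhds : Filter.Tendsto (fun _ : ℝ => (1:ℝ)) Filter.atTop (nhds 1)).sub hHtend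
      simpa using this
    apply tendsto_of_tendsto_of_tendsto_of_le_of_le' hlow tendsto_const_nhds
    · filter_upwards [Filter.eventually_gt_atTop (0:ℝ)] with u hu
      exact (hbounds u hu).1
    · filter_upwards [Filter.eventually_gt_atTop (0:ℝ)] with u hu
      exact (hbounds u hu).2
  · have h1 : Filter.Tendsto (fun u => (1 + H u)⁻¹) Filter.atTop (nhds 1) := by
      have := ((tendsto_const_nhds : Filter.Tendsto (fun _ : ℝ => (1:ℝ)) Filter.atTop (nhds 1)).add hHtend).inv₀ (by norm_num : (1:ℝ) + 0 ≠ 0)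
      simpa using this
    apply h1.congr'
    filter_upwards [Filter.eventually_gt_atTop (0:ℝ)] with u hu
    rw [hdf u hu, hdf2 u hu, hf u]
    have hG1u := hG1pos u hu.le
    have hG2u := hG2pos u hu.le
    have hne1 : G1 u ≠ 0 := hG1u.ne'
    have hne2 : (G1 u)^2 + G2 u ≠ 0 := by positivity
    simp only [hHdef]
    rw [eq_div_iff (by positivity)]
    field_simp
end

section
/- Let g ∈ C³([0,∞)) satisfy g'(u) > 0, g''(u) > 0, and 2·g''(u)² − g'(u)·g'''(u) > 0 for all u ≥ 0. Then the function u ↦ g''(u)/g'(u)² is strictly decreasing on [0,∞) and g''(u)/g'(u)² → 0 as u → ∞. -/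
/-- If `g ∈ C³([0,∞))` with `g' > 0`, `g'' > 0` and `2 g''² - g' g''' > 0` on
`[0,∞)`, then `u ↦ g''(u)/g'(u)²` is strictly decreasing on `[0,∞)` and tends
to `0` at infinity. -/
theorem gpp_div_gp_sq_strictAnti_tendsto_zero
    (g : ℝ → ℝ)
    (hg : ContDiffOn ℝ 3 g (Set.Ici 0))
    (h1 : ∀ u : ℝ, 0 ≤ u → 0 < dIci g u)
    (h2 : ∀ u : ℝ, 0 ≤ u → 0 < dIci (dIci g) u)
    (h3 : ∀ u : ℝ, 0 ≤ u →
      0 < 2 * (dIci (dIci g) u) ^ 2 - dIci g u * dIci (dIci (dIci g)) u) :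
    StrictAntiOn (fun u => dIci (dIci g) u / (dIci g u) ^ 2) (Set.Ici 0) ∧
    Filter.Tendsto (fun u => dIci (dIci g) u / (dIci g u) ^ 2)
      Filter.atTop (nhds 0) := by
  have hS : UniqueDiffOn ℝ (Set.Ici (0:ℝ)) := uniqueDiffOn_Ici 0
  set p := dIci g with hp_def
  set q := dIci p with hq_def
  set r := dIci q with hr_def
  have hp : ContDiffOn ℝ 2 p (Set.Ici 0) := hg.derivWithin hS (by norm_num)
  have hq1 : ContDiffOn ℝ 1 q (Set.Ici 0) := hp.derivWithin hS (by norm_num)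
  have hpdiff : DifferentiableOn ℝ p (Set.Ici 0) := hp.differentiableOn (by norm_num)
  have hqdiff : DifferentiableOn ℝ q (Set.Ici 0) := hq1.differentiableOn one_ne_zero
  have hpAt : ∀ x : ℝ, 0 < x → HasDerivAt p (q x) x := by
    intro x hx
    exact ((hpdiff x (le_of_lt hx)).hasDerivWithinAt).hasDerivAt (Ici_mem_nhds hx)
  have hqAt : ∀ x : ℝ, 0 < x → HasDerivAt q (r x) x := by
    intro x hx
    exact ((hqdiff x (le_of_lt hx)).hasDerivWithinAt).hasDerivAt (Ici_mem_nhds hx)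
  have key : ∀ x : ℝ, 0 < x →
      HasDerivAt (fun u => q u / p u ^ 2)
        ((r x * p x ^ 2 - q x * (2 * p x ^ 1 * q x)) / (p x ^ 2) ^ 2) x := by
    intro x hx
    exact (hqAt x hx).div ((hpAt x hx).pow 2)
      (pow_ne_zero 2 (ne_of_gt (h1 x (le_of_lt hx))))
  have hneg : ∀ x : ℝ, 0 < x →
      (r x * p x ^ 2 - q x * (2 * p x ^ 1 * q x)) / (p x ^ 2) ^ 2 < 0 := by
    intro x hx
    have hp0 := h1 x (le_of_lt hx)
    have h3x := h3 x (le_of_lt hx)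
    apply div_neg_of_neg_of_pos
    · nlinarith [mul_pos hp0 h3x]
    · exact pow_pos (pow_pos hp0 2) 2
  have hcont : ContinuousOn (fun u => q u / p u ^ 2) (Set.Ici 0) :=
    hq1.continuousOn.div (hp.continuousOn.pow 2)
      (fun x hx => pow_ne_zero 2 (ne_of_gt (h1 x hx)))
  have hanti : StrictAntiOn (fun u => q u / p u ^ 2) (Set.Ici 0) := by
    apply strictAntiOn_of_deriv_neg (convex_Ici 0) hcont
    intro x hx
    rw [interior_Ici] at hx
    rw [(key x hx).deriv]
    exact hneg x hx
  refine ⟨hanti, ?_⟩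
  -- bound: for u > 0, q u / p u ^ 2 < (p 0)⁻¹ / u
  have hbound : ∀ u : ℝ, 0 < u → q u / p u ^ 2 < (p 0)⁻¹ / u := by
    intro u hu
    set φ : ℝ → ℝ := fun x => (p x)⁻¹ with hφ
    have hφcont : ContinuousOn φ (Set.Icc 0 u) :=
      (hp.continuousOn.inv₀ fun x hx => ne_of_gt (h1 x hx)).mono Set.Icc_subset_Ici_self
    have hφderiv : ∀ x ∈ Set.Ioo 0 u, HasDerivAt φ (-(q x) / p x ^ 2) x := by
      intro x hx
      exact (hpAt x hx.1).inv (ne_of_gt (h1 x (le_of_lt hx.1)))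
    obtain ⟨c, hc, hceq⟩ :=
      exists_hasDerivAt_eq_slope φ (fun x => -(q x) / p x ^ 2) hu hφcont hφderiv
    have hEq : φ u - φ 0 = (-(q c) / p c ^ 2) * u := by
      rw [sub_zero] at hceq
      field_simp at hceq ⊢
      linarith
    have hφu : 0 < φ u := inv_pos.mpr (h1 u (le_of_lt hu))
    have hqc : q u / p u ^ 2 < q c / p c ^ 2 :=
      hanti (le_of_lt hc.1) (le_of_lt hu) hc.2
    have hstep : q c / p c ^ 2 * u = φ 0 - φ u := by
      rw [neg_div] at hEq; linarith
    have hφ0 : φ 0 = (p 0)⁻¹ := rfl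
    calc q u / p u ^ 2 < q c / p c ^ 2 := hqc
      _ ≤ (p 0)⁻¹ / u := by
          rw [le_div_iff₀ hu]
          rw [hstep, hφ0]
          linarith
  apply squeeze_zero' ?_ ?_
    (Filter.Tendsto.div_atTop (tendsto_const_nhds (x := (p 0)⁻¹)) Filter.tendsto_id)
  · filter_upwards [Filter.eventually_ge_atTop 0] with u hu
    exact le_of_lt (div_pos (h2 u hu) (pow_pos (h1 u hu) 2))
  · filter_upwards [Filter.eventually_gt_atTop 0] with u hu
    exact le_of_lt (hbound u hu)
end

section
/- Let g satisfy condition (g) and set f = e^g. Then F(u) − f'(u)/(f(u)·f''(u)) > 0 for all u ≥ 0. -/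
open Set MeasureTheory Filter

variable {g : ℝ → ℝ}

lemma contDiffOn_g1 (hg : ConditionG g) : ContDiffOn ℝ 2 (dIci g) (Set.Ici 0) :=
  hg.1.derivWithin (uniqueDiffOn_Ici 0) (by norm_num)

lemma contDiffOn_g2 (hg : ConditionG g) : ContDiffOn ℝ 1 (dIci (dIci g)) (Set.Ici 0) :=
  (contDiffOn_g1 hg).derivWithin (uniqueDiffOn_Ici 0) (by norm_num)

lemma hasDerivAt_aux {F : ℝ → ℝ} {n : ℕ∞} (hF : ContDiffOn ℝ n F (Set.Ici 0))
    (hn : 1 ≤ n) {s : ℝ} (hs : 0 < s) : HasDerivAt F (dIci F s) s := by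
  have hmem : Set.Ici (0:ℝ) ∈ nhds s := Ici_mem_nhds hs
  have hd : DifferentiableAt ℝ F s := ((hF.contDiffAt hmem).differentiableAt (by exact_mod_cast (lt_of_lt_of_le zero_lt_one hn).ne'))
  have : dIci F s = deriv F s := derivWithin_of_mem_nhds hmem
  rw [this]
  exact hd.hasDerivAt

lemma hasDerivAt_g (hg : ConditionG g) {s : ℝ} (hs : 0 < s) :
    HasDerivAt g (dIci g s) s := hasDerivAt_aux hg.1 (by norm_num) hs

lemma hasDerivAt_g1 (hg : ConditionG g) {s : ℝ} (hs : 0 < s) :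
    HasDerivAt (dIci g) (dIci (dIci g) s) s :=
  hasDerivAt_aux (contDiffOn_g1 hg) (by norm_num) hs

lemma hasDerivAt_g2 (hg : ConditionG g) {s : ℝ} (hs : 0 < s) :
    HasDerivAt (dIci (dIci g)) (dIci (dIci (dIci g)) s) s :=
  hasDerivAt_aux (contDiffOn_g2 hg) (by norm_num) hs

lemma monotoneOn_g1 (hg : ConditionG g) : MonotoneOn (dIci g) (Set.Ici 0) := by
  apply monotoneOn_of_deriv_nonneg (convex_Ici 0) ((contDiffOn_g1 hg).continuousOn)
  · intro x hx
    rw [interior_Ici] at hx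
    exact ((hasDerivAt_g1 hg hx).differentiableAt).differentiableWithinAt
  · intro x hx
    rw [interior_Ici] at hx
    rw [(hasDerivAt_g1 hg hx).deriv]
    exact (hg.2 x hx.le).2.1.le

lemma g_lower (hg : ConditionG g) {s : ℝ} (hs : 0 ≤ s) :
    g 0 + dIci g 0 * s ≤ g s := by
  set c := dIci g 0 with hc
  have hmono : MonotoneOn (fun x => g x - c * x) (Set.Ici 0) := by
    apply monotoneOn_of_deriv_nonneg (convex_Ici 0)
    · exact (hg.1.continuousOn.sub (continuous_const.mul continuous_id).continuousOn)
    · intro x hx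
      rw [interior_Ici] at hx
      have h : HasDerivAt (fun x => g x - c * x) (dIci g x - c) x := by
        exact ((hasDerivAt_g hg hx).sub ((hasDerivAt_id' x).const_mul c)).congr_deriv (by ring)
      exact h.differentiableAt.differentiableWithinAt
    · intro x hx
      rw [interior_Ici] at hx
      have h : HasDerivAt (fun x => g x - c * x) (dIci g x - c) x := by
        exact ((hasDerivAt_g hg hx).sub ((hasDerivAt_id' x).const_mul c)).congr_deriv (by ring)
      rw [h.deriv]
      have := monotoneOn_g1 hg (self_mem_Ici (a := (0:ℝ))) (le_of_lt hx : (0:ℝ) ≤ x) hx.le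
      linarith
  have := hmono (self_mem_Ici) hs hs
  simp only [mul_zero, sub_zero] at this
  linarith

lemma integrableOn_exp_neg_g (hg : ConditionG g) {u : ℝ} (hu : 0 ≤ u) :
    IntegrableOn (fun s => Real.exp (-(g s))) (Set.Ioi u) := by
  set c := dIci g 0 with hc
  have hcpos : 0 < c := (hg.2 0 le_rfl).1
  apply Integrable.mono' ((exp_neg_integrableOn_Ioi u hcpos).const_mul (Real.exp (-(g 0))))
  · apply ContinuousOn.aestronglyMeasurable _ measurableSet_Ioi
    apply (Real.continuous_exp.comp continuous_neg).comp_continuousOn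
    exact hg.1.continuousOn.mono (fun x hx => le_of_lt (lt_of_le_of_lt hu hx))
  · rw [ae_restrict_iff' measurableSet_Ioi]
    filter_upwards with s hs
    have hs0 : (0:ℝ) ≤ s := le_of_lt (lt_of_le_of_lt hu hs)
    have := g_lower hg hs0
    rw [Real.norm_eq_abs, abs_of_pos (Real.exp_pos _), ← Real.exp_add]
    apply Real.exp_le_exp.2
    linarith

noncomputable def phi (g : ℝ → ℝ) (u : ℝ) : ℝ :=
  dIci g u * Real.exp (-(g u)) / (dIci (dIci g) u + (dIci g u) ^ 2)

lemma Q_pos (hg : ConditionG g) {u : ℝ} (hu : 0 ≤ u) :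
    0 < dIci (dIci g) u + (dIci g u) ^ 2 := by
  have h1 := (hg.2 u hu).1
  have h2 := (hg.2 u hu).2.1
  positivity

lemma phi_pos (hg : ConditionG g) {u : ℝ} (hu : 0 ≤ u) : 0 < phi g u := by
  have h1 := (hg.2 u hu).1
  have hQ := Q_pos hg hu
  have hE := Real.exp_pos (-(g u))
  unfold phi; positivity

lemma phi_le (hg : ConditionG g) {u : ℝ} (hu : 0 ≤ u) :
    phi g u ≤ Real.exp (-(g 0)) * Real.exp (-(dIci g 0 * u)) / dIci g 0 := by
  have h1 := (hg.2 u hu).1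
  have h2 := (hg.2 u hu).2.1
  have hc : 0 < dIci g 0 := (hg.2 0 le_rfl).1
  have hcu : dIci g 0 ≤ dIci g u := monotoneOn_g1 hg self_mem_Ici hu hu
  have hQ := Q_pos hg hu
  have step1 : phi g u ≤ Real.exp (-(g u)) / dIci g u := by
    rw [phi, div_le_div_iff₀ hQ h1]
    have : dIci g u * Real.exp (-(g u)) * dIci g u = Real.exp (-(g u)) * (dIci g u)^2 := by ring
    rw [this]
    have hE := (Real.exp_pos (-(g u))).le
    nlinarith
  apply step1.trans
  rw [← Real.exp_add]
  have hgl := g_lower hg hu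
  apply div_le_div₀ (Real.exp_pos _).le _ hc hcu
  apply Real.exp_le_exp.2; linarith

lemma phi_tendsto (hg : ConditionG g) : Tendsto (phi g) atTop (nhds 0) := by
  have hc : 0 < dIci g 0 := (hg.2 0 le_rfl).1
  have hbound : Tendsto (fun u => Real.exp (-(g 0)) * Real.exp (-(dIci g 0 * u)) / dIci g 0)
      atTop (nhds 0) := by
    have h1 : Tendsto (fun u : ℝ => -(dIci g 0 * u)) atTop atBot := by
      apply tendsto_neg_atBot_iff.2
      exact (tendsto_atTop_atTop_of_monotone (fun a b hab => by nlinarith)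
        (fun b => ⟨b / dIci g 0 + 1, by rw [mul_add, mul_div_cancel₀ _ hc.ne']; nlinarith⟩))
    have := (Real.tendsto_exp_atBot.comp h1).const_mul (Real.exp (-(g 0)))
    simpa using this.div_const (dIci g 0)
  apply tendsto_of_tendsto_of_tendsto_of_le_of_le' tendsto_const_nhds hbound
  · filter_upwards [eventually_ge_atTop (0:ℝ)] with u hu using (phi_pos hg hu).le
  · filter_upwards [eventually_ge_atTop (0:ℝ)] with u hu using phi_le hg hu

lemma continuousOn_phi (hg : ConditionG g) : ContinuousOn (phi g) (Set.Ici 0) := by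
  apply ContinuousOn.div
  · exact ((contDiffOn_g1 hg).continuousOn.mul
      ((Real.continuous_exp.comp continuous_neg).comp_continuousOn hg.1.continuousOn))
  · exact (contDiffOn_g2 hg).continuousOn.add ((contDiffOn_g1 hg).continuousOn.pow 2)
  · exact fun x hx => (Q_pos hg hx).ne'

lemma hasDerivAt_phi (hg : ConditionG g) {s : ℝ} (hs : 0 < s) :
    HasDerivAt (phi g)
      (Real.exp (-(g s)) *
        ((2 * (dIci (dIci g) s) ^ 2 - dIci g s * dIci (dIci (dIci g)) s) /
          (dIci (dIci g) s + (dIci g s) ^ 2) ^ 2) - Real.exp (-(g s))) s := by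
  have hQ : dIci (dIci g) s + (dIci g s) ^ 2 ≠ 0 := (Q_pos hg hs.le).ne'
  have hG := hasDerivAt_g hg hs
  have hG1 := hasDerivAt_g1 hg hs
  have hG2 := hasDerivAt_g2 hg hs
  have hE : HasDerivAt (fun x => Real.exp (-(g x))) (Real.exp (-(g s)) * (-(dIci g s))) s :=
    (hG.neg).exp
  have hnum : HasDerivAt (fun x => dIci g x * Real.exp (-(g x)))
      (dIci (dIci g) s * Real.exp (-(g s)) + dIci g s * (Real.exp (-(g s)) * (-(dIci g s)))) s :=
    hG1.mul hE
  have hden : HasDerivAt (fun x => dIci (dIci g) x + (dIci g x) ^ 2)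
      (dIci (dIci (dIci g)) s + 2 * dIci g s * dIci (dIci g) s) s := by
    have := hG2.add ((hG1.pow 2))
    exact this.congr_deriv (by rw [Nat.cast_ofNat, show (2:ℕ) - 1 = 1 from rfl, pow_one])
  have := hnum.div hden hQ
  refine this.congr_deriv ?_
  set a := dIci g s; set b := dIci (dIci g) s; set c := dIci (dIci (dIci g)) s
  set E := Real.exp (-(g s))
  field_simp
  ring

lemma key (hg : ConditionG g) {u : ℝ} (hu : 0 ≤ u) :
    phi g u < ∫ s in Set.Ioi u, Real.exp (-(g s)) := by
  set e : ℝ → ℝ := fun t => Real.exp (-(g t)) with he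
  have hint : IntegrableOn e (Set.Ioi u) := integrableOn_exp_neg_g hg hu
  have hecont : ContinuousOn e (Set.Ici 0) :=
    (Real.continuous_exp.comp continuous_neg).comp_continuousOn hg.1.continuousOn
  set K : ℝ → ℝ := fun s => (∫ t in Set.Ioc u s, e t) + phi g s with hKdef
  -- derivative of K at points above u
  have hKderiv : ∀ s, u < s → HasDerivAt K
      (e s * ((2 * (dIci (dIci g) s) ^ 2 - dIci g s * dIci (dIci (dIci g)) s) /
        (dIci (dIci g) s + (dIci g s) ^ 2) ^ 2)) s := by
    intro s hsu
    have hs0 : 0 < s := lt_of_le_of_lt hu hsu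
    have hII : IntervalIntegrable e volume u s :=
      (intervalIntegrable_iff_integrableOn_Ioc_of_le hsu.le).2
        (hint.mono_set Set.Ioc_subset_Ioi_self)
    have hmeas : StronglyMeasurableAtFilter e (nhds s) :=
      ⟨Set.Ioi 0, Ioi_mem_nhds hs0,
        ((hecont.mono Set.Ioi_subset_Ici_self).aestronglyMeasurable measurableSet_Ioi)⟩
    have hcontAt : ContinuousAt e s := hecont.continuousAt (Ici_mem_nhds hs0)
    have hI : HasDerivAt (fun x => ∫ t in u..x, e t) (e s) s :=
      intervalIntegral.integral_hasDerivAt_right hII hmeas hcontAt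
    have heq : (fun x => ∫ t in Set.Ioc u x, e t) =ᶠ[nhds s] (fun x => ∫ t in u..x, e t) := by
      filter_upwards [Ioi_mem_nhds hsu] with x hx
      rw [intervalIntegral.integral_of_le (le_of_lt hx)]
    have hI' : HasDerivAt (fun x => ∫ t in Set.Ioc u x, e t) (e s) s :=
      hI.congr_of_eventuallyEq heq
    have := hI'.add (hasDerivAt_phi hg hs0)
    refine this.congr_deriv ?_
    ring
  -- strict monotonicity on Icc u b
  have hmono : ∀ b, StrictMonoOn K (Set.Icc u b) := by
    intro b
    apply strictMonoOn_of_deriv_pos (convex_Icc u b)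
    · apply ContinuousOn.add
      · apply intervalIntegral.continuousOn_primitive
        rw [integrableOn_Icc_iff_integrableOn_Ioc]
        exact hint.mono_set Set.Ioc_subset_Ioi_self
      · exact (continuousOn_phi hg).mono (fun x hx => le_trans hu hx.1)
    · intro s hs
      rw [interior_Icc] at hs
      rw [(hKderiv s hs.1).deriv]
      have hs0 : (0:ℝ) ≤ s := le_trans hu hs.1.le
      have hB := (hg.2 s hs0).2.2.2
      have hQ := Q_pos hg hs0
      have hE : 0 < e s := Real.exp_pos _
      positivity
  have hKu : K u = phi g u := by simp [hKdef]
  set v0 := u + 1 with hv0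
  have h1 : K u < K v0 :=
    hmono v0 ⟨le_rfl, by linarith⟩ ⟨by linarith, le_rfl⟩ (by linarith)
  have h3 : ∀ v, v0 ≤ v → K v0 - phi g v ≤ ∫ t in Set.Ioi u, e t := by
    intro v hv
    have h2 : K v0 ≤ K v :=
      (hmono v).monotoneOn ⟨by linarith, by linarith⟩ ⟨by linarith, le_rfl⟩ hv
    have h4 : (∫ t in Set.Ioc u v, e t) ≤ ∫ t in Set.Ioi u, e t := by
      apply setIntegral_mono_set hint
      · filter_upwards with t using (Real.exp_pos _).le
      · exact HasSubset.Subset.eventuallyLE Set.Ioc_subset_Ioi_self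
    have : K v = (∫ t in Set.Ioc u v, e t) + phi g v := rfl
    linarith
  have hlim : K v0 ≤ ∫ t in Set.Ioi u, e t := by
    have ht : Tendsto (fun v => K v0 - phi g v) atTop (nhds (K v0)) := by
      simpa using tendsto_const_nhds.sub (phi_tendsto hg)
    exact le_of_tendsto ht (eventually_atTop.2 ⟨v0, h3⟩)
  calc phi g u = K u := hKu.symm
    _ < K v0 := h1
    _ ≤ _ := hlim

/-- If `g` satisfies condition (g) and `f = e^g`, then
`F(u) - f'(u)/(f(u) f''(u)) > 0` for all `u ≥ 0`. -/
theorem Fint_sub_fp_div_ffpp_pos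
    (g : ℝ → ℝ) (hg : ConditionG g)
    (f : ℝ → ℝ) (hf : ∀ u : ℝ, f u = Real.exp (g u)) :
    ∀ u : ℝ, 0 ≤ u →
      0 < Fint f u - dIci f u / (f u * dIci (dIci f) u) := by
  intro u hu
  have hE : (0:ℝ) < Real.exp (g u) := Real.exp_pos _
  have hUD := uniqueDiffOn_Ici (0:ℝ)
  have hfe : f = fun x => Real.exp (g x) := funext hf
  have hgd : ∀ x ∈ Set.Ici (0:ℝ), HasDerivWithinAt g (dIci g x) (Set.Ici 0) x :=
    fun x hx => (hg.1.differentiableOn (by norm_num) x hx).hasDerivWithinAt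
  have hf1 : ∀ x ∈ Set.Ici (0:ℝ), dIci f x = Real.exp (g x) * dIci g x := by
    intro x hx
    have h : HasDerivWithinAt f (Real.exp (g x) * dIci g x) (Set.Ici 0) x := by
      rw [hfe]; exact (hgd x hx).exp
    exact h.derivWithin (hUD x hx)
  have hg1d : HasDerivWithinAt (dIci g) (dIci (dIci g) u) (Set.Ici 0) u :=
    ((contDiffOn_g1 hg).differentiableOn (by norm_num) u hu).hasDerivWithinAt
  have hf2 : dIci (dIci f) u
      = Real.exp (g u) * dIci g u * dIci g u + Real.exp (g u) * dIci (dIci g) u := by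
    have hcong : dIci (dIci f) u
        = derivWithin (fun x => Real.exp (g x) * dIci g x) (Set.Ici 0) u :=
      derivWithin_congr hf1 (hf1 u hu)
    rw [hcong]
    have h : HasDerivWithinAt (fun x => Real.exp (g x) * dIci g x)
        (Real.exp (g u) * dIci g u * dIci g u + Real.exp (g u) * dIci (dIci g) u)
        (Set.Ici 0) u := ((hgd u hu).exp).mul hg1d
    exact h.derivWithin (hUD u hu)
  have hkey := key hg hu
  have hFint : Fint f u = ∫ s in Set.Ioi u, Real.exp (-(g s)) := by
    unfold Fint
    simp only [hfe, ← Real.exp_neg]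
  rw [hFint, hf1 u hu, hf2, hf u]
  have hQ := Q_pos hg hu
  have h1 := (hg.2 u hu).1
  have heq : Real.exp (g u) * dIci g u /
      (Real.exp (g u) * (Real.exp (g u) * dIci g u * dIci g u
        + Real.exp (g u) * dIci (dIci g) u)) = phi g u := by
    rw [phi, Real.exp_neg]
    rw [show Real.exp (g u) * dIci g u * dIci g u + Real.exp (g u) * dIci (dIci g) u
        = Real.exp (g u) * (dIci (dIci g) u + dIci g u ^ 2) by ring]
    field_simp
  rw [heq]
  linarith
end

section
/- Let g satisfy condition (g) and set f = e^g. Then the function u ↦ f'(u)·F(u) is strictly increasing on [0,∞); equivalently, f''(u)·F(u) − f'(u)/f(u) > 0 for all u ≥ 0. -/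
open Set MeasureTheory Real Filter

/-- If `g` satisfies condition (g) and `f = e^g`, then `u ↦ f'(u) F(u)` is
strictly increasing on `[0,∞)`; equivalently `f''(u) F(u) - f'(u)/f(u) > 0`
for all `u ≥ 0`. -/
theorem fp_mul_Fint_strictMono
    (g : ℝ → ℝ) (hg : ConditionG g)
    (f : ℝ → ℝ) (hf : ∀ u : ℝ, f u = Real.exp (g u)) :
    StrictMonoOn (fun u => dIci f u * Fint f u) (Set.Ici 0) ∧
    ∀ u : ℝ, 0 ≤ u → 0 < dIci (dIci f) u * Fint f u - dIci f u / f u := by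
  obtain ⟨hsm, hcond⟩ := hg
  have hUD : UniqueDiffOn ℝ (Set.Ici (0:ℝ)) := uniqueDiffOn_Ici 0
  set g1 := dIci g with hg1def
  set g2 := dIci (dIci g) with hg2def
  set g3 := dIci (dIci (dIci g)) with hg3def
  -- smoothness of derivatives
  have hg1sm : ContDiffOn ℝ 2 g1 (Set.Ici 0) := hsm.derivWithin hUD (by norm_num)
  have hg2sm : ContDiffOn ℝ 1 g2 (Set.Ici 0) := hg1sm.derivWithin hUD (by norm_num)
  -- derivative facts
  have hgd : ∀ u ∈ Set.Ici (0:ℝ), HasDerivWithinAt g (g1 u) (Set.Ici 0) u := fun u hu =>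
    ((hsm.differentiableOn (by norm_num) u hu).hasDerivWithinAt)
  have hg1d : ∀ u ∈ Set.Ici (0:ℝ), HasDerivWithinAt g1 (g2 u) (Set.Ici 0) u := fun u hu =>
    ((hg1sm.differentiableOn (by norm_num) u hu).hasDerivWithinAt)
  have hg2d : ∀ u ∈ Set.Ici (0:ℝ), HasDerivWithinAt g2 (g3 u) (Set.Ici 0) u := fun u hu =>
    ((hg2sm.differentiableOn (by norm_num) u hu).hasDerivWithinAt)
  have hg1pos : ∀ u ∈ Set.Ici (0:ℝ), 0 < g1 u := fun u hu => (hcond u hu).1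
  have hg2pos : ∀ u ∈ Set.Ici (0:ℝ), 0 < g2 u := fun u hu => (hcond u hu).2.1
  have hfpos : ∀ u, 0 < f u := fun u => (hf u) ▸ Real.exp_pos _
  have hfne : ∀ u, f u ≠ 0 := fun u => (hfpos u).ne'
  -- f' = g1 * f on Ici 0
  have hfd : ∀ u ∈ Set.Ici (0:ℝ), HasDerivWithinAt f (g1 u * f u) (Set.Ici 0) u := by
    intro u hu
    have h1 : HasDerivWithinAt (fun v => Real.exp (g v)) (Real.exp (g u) * g1 u) (Set.Ici 0) u :=
      (hgd u hu).exp
    have := h1.congr (fun v _ => (hf v)) (hf u)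
    rw [← hf u, mul_comm] at this
    exact this
  have hdf : ∀ u ∈ Set.Ici (0:ℝ), dIci f u = g1 u * f u := fun u hu =>
    (hfd u hu).derivWithin (hUD u hu)
  -- f'' = (g2 + g1²) f on Ici 0
  set B : ℝ → ℝ := fun u => g2 u + g1 u ^ 2 with hBdef
  have hBpos : ∀ u ∈ Set.Ici (0:ℝ), 0 < B u := fun u hu =>
    add_pos_of_pos_of_nonneg (hg2pos u hu) (sq_nonneg _)
  have hdf2aux : ∀ u ∈ Set.Ici (0:ℝ),
      HasDerivWithinAt (fun v => g1 v * f v) (B u * f u) (Set.Ici 0) u := by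
    intro u hu
    have h1 := (hg1d u hu).mul (hfd u hu)
    have heq : g2 u * f u + g1 u * (g1 u * f u) = B u * f u := by simp only [hBdef]; ring
    rw [heq] at h1; exact h1
  have hdfd : ∀ u ∈ Set.Ici (0:ℝ), HasDerivWithinAt (dIci f) (B u * f u) (Set.Ici 0) u := by
    intro u hu
    exact (hdf2aux u hu).congr (fun v hv => hdf v hv) (hdf u hu)
  have hdf2 : ∀ u ∈ Set.Ici (0:ℝ), dIci (dIci f) u = B u * f u := fun u hu =>
    (hdfd u hu).derivWithin (hUD u hu)
  -- lower bound for g1 and linear growth for g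
  set c : ℝ := g1 0 with hcdef
  have hc : 0 < c := hg1pos 0 Set.self_mem_Ici
  have hg1mono : MonotoneOn g1 (Set.Ici 0) := by
    apply monotoneOn_of_hasDerivWithinAt_nonneg (convex_Ici 0)
      (hg1sm.continuousOn) (f' := g2)
      (fun x hx => (hg1d x (interior_subset hx)).mono interior_subset)
      (fun x hx => (hg2pos x (interior_subset hx)).le)
  have hg1lb : ∀ u ∈ Set.Ici (0:ℝ), c ≤ g1 u := fun u hu =>
    hg1mono (Set.self_mem_Ici) hu hu
  have hglb : ∀ u ∈ Set.Ici (0:ℝ), g 0 + c * u ≤ g u := by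
    have hmono : MonotoneOn (fun u => g u - c * u) (Set.Ici 0) := by
      apply monotoneOn_of_hasDerivWithinAt_nonneg (convex_Ici 0)
        (f' := fun u => g1 u - c)
      · exact (hsm.continuousOn).sub (continuous_const.mul continuous_id).continuousOn
      · intro x hx
        have := ((hgd x (interior_subset hx)).sub
          ((hasDerivWithinAt_id x _).const_mul c)).mono
          (interior_subset : interior (Set.Ici (0:ℝ)) ⊆ _)
        simpa using (show HasDerivWithinAt (fun u => g u - c * u) _ _ x from this)
      · intro x hx
        have := hg1lb x (interior_subset hx); linarith
    intro u hu
    have := hmono (Set.self_mem_Ici) hu hu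
    simp only [mul_zero, sub_zero] at this
    linarith
  -- continuity of f and 1/f on Ici 0
  have hfcont : ContinuousOn f (Set.Ici 0) :=
    ContinuousOn.congr (Real.continuous_exp.comp_continuousOn hsm.continuousOn)
      (fun v _ => hf v)
  have hcontinv : ContinuousOn (fun s => (f s)⁻¹) (Set.Ici 0) :=
    hfcont.inv₀ (fun v _ => hfne v)
  -- pointwise exponential bound for 1/f
  have hinvbd : ∀ u ∈ Set.Ici (0:ℝ), (f u)⁻¹ ≤ Real.exp (-g 0) * Real.exp (-(c * u)) := by
    intro u hu
    rw [hf u, ← Real.exp_neg, ← Real.exp_add]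
    apply Real.exp_le_exp.2
    have := hglb u hu; linarith
  -- integrability of 1/f on Ioi a for a ≥ 0
  have hint : ∀ a ∈ Set.Ici (0:ℝ), IntegrableOn (fun s => (f s)⁻¹) (Set.Ioi a) := by
    intro a ha
    have hbase : IntegrableOn (fun s => (f s)⁻¹) (Set.Ioi 0) := by
      apply Integrable.mono' ((exp_neg_integrableOn_Ioi 0 hc).const_mul (Real.exp (-g 0)))
      · exact (hcontinv.mono (Set.Ioi_subset_Ici le_rfl)).aestronglyMeasurable measurableSet_Ioi
      · filter_upwards [ae_restrict_mem measurableSet_Ioi] with s hs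
        rw [Real.norm_eq_abs, abs_of_pos (inv_pos.2 (hfpos s))]
        have := hinvbd s (Set.mem_Ici.mpr (le_of_lt (Set.mem_Ioi.mp hs)))
        calc (f s)⁻¹ ≤ Real.exp (-g 0) * Real.exp (-(c * s)) := this
          _ = Real.exp (-g 0) * Real.exp (-c * s) := by ring_nf
      
    exact hbase.mono_set (Set.Ioi_subset_Ioi ha)
  -- representation of Fint on Ici 0
  have hFrep : ∀ u ∈ Set.Ici (0:ℝ),
      Fint f u = Fint f 0 - ∫ t in (0:ℝ)..u, (f t)⁻¹ := by
    intro u hu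
    have hsplit : Fint f 0 = (∫ t in Set.Ioc 0 u, (f t)⁻¹) + Fint f u := by
      rw [Fint, Fint, ← setIntegral_union (Set.Ioc_disjoint_Ioi le_rfl) measurableSet_Ioi
        ((hint 0 Set.self_mem_Ici).mono_set Set.Ioc_subset_Ioi_self) (hint u hu),
        Set.Ioc_union_Ioi_eq_Ioi hu]
    rw [intervalIntegral.integral_of_le hu]
    linarith [hsplit]
  -- derivative of Fint on Ici 0
  have hFd : ∀ u ∈ Set.Ici (0:ℝ), HasDerivWithinAt (Fint f) (-(f u)⁻¹) (Set.Ici 0) u := by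
    intro u hu
    have hii : IntervalIntegrable (fun s => (f s)⁻¹) volume 0 u := by
      rw [intervalIntegrable_iff_integrableOn_Ioc_of_le hu]
      exact (hint 0 Set.self_mem_Ici).mono_set Set.Ioc_subset_Ioi_self
    have hmeas : StronglyMeasurableAtFilter (fun s => (f s)⁻¹) (nhdsWithin u (Set.Ici 0)) :=
      ⟨Set.Ici 0, self_mem_nhdsWithin, hcontinv.aestronglyMeasurable measurableSet_Ici⟩
    have hkey : HasDerivWithinAt (fun v => ∫ t in (0:ℝ)..v, (f t)⁻¹) ((f u)⁻¹) (Set.Ici 0) u := by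
      rcases eq_or_lt_of_le (Set.mem_Ici.mp hu) with h0 | h0
      · rw [← h0] at hii hmeas ⊢
        have hmeas2 : StronglyMeasurableAtFilter (fun s => (f s)⁻¹)
            (nhdsWithin 0 (Set.Ioi 0)) :=
          ⟨Set.Ici 0, Filter.mem_of_superset self_mem_nhdsWithin Set.Ioi_subset_Ici_self,
            hcontinv.aestronglyMeasurable measurableSet_Ici⟩
        exact intervalIntegral.integral_hasDerivWithinAt_right (t := Set.Ioi 0) hii hmeas2
          ((hcontinv 0 Set.self_mem_Ici).mono Set.Ioi_subset_Ici_self)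
      · have hca : ContinuousAt (fun s => (f s)⁻¹) u :=
          (hcontinv.continuousAt (Ici_mem_nhds h0))
        have hmeas' : StronglyMeasurableAtFilter (fun s => (f s)⁻¹) (nhds u) :=
          ⟨Set.Ici 0, Ici_mem_nhds h0, hcontinv.aestronglyMeasurable measurableSet_Ici⟩
        exact (intervalIntegral.integral_hasDerivAt_right hii
          hmeas' hca).hasDerivWithinAt
    have h2 : HasDerivWithinAt (fun v => Fint f 0 - ∫ t in (0:ℝ)..v, (f t)⁻¹)
        (-(f u)⁻¹) (Set.Ici 0) u := by
      have := (hasDerivWithinAt_const u _ (Fint f 0)).sub hkey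
      rw [zero_sub] at this; exact this
    exact h2.congr (fun v hv => hFrep v hv) (hFrep u hu)
  have hFcont : ContinuousOn (Fint f) (Set.Ici 0) := fun u hu =>
    (hFd u hu).continuousWithinAt
  -- the comparison function G
  set G : ℝ → ℝ := fun u => g1 u / B u * (f u)⁻¹ with hGdef
  have hBd : ∀ u ∈ Set.Ici (0:ℝ),
      HasDerivWithinAt B (g3 u + 2 * g1 u * g2 u) (Set.Ici 0) u := by
    intro u hu
    have := (hg2d u hu).add ((hg1d u hu).pow 2)
    simpa [pow_one, mul_comm, mul_assoc, mul_left_comm] using (show HasDerivWithinAt B _ _ u from this)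
  have hGd : ∀ u ∈ Set.Ici (0:ℝ),
      HasDerivWithinAt G
        ((g2 u * B u - g1 u * (g3 u + 2 * g1 u * g2 u)) / (B u) ^ 2 * (f u)⁻¹
          + g1 u / B u * (-(g1 u * f u) / (f u) ^ 2)) (Set.Ici 0) u := by
    intro u hu
    exact ((hg1d u hu).div (hBd u hu) (hBpos u hu).ne').mul
      ((hfd u hu).inv (hfne u))
  -- derivative of φ = F - G
  set φ : ℝ → ℝ := fun u => Fint f u - G u with hφdef
  have hφd : ∀ u ∈ Set.Ici (0:ℝ),
      HasDerivWithinAt φ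
        (-((f u)⁻¹ * (2 * (g2 u) ^ 2 - g1 u * g3 u) / (B u) ^ 2)) (Set.Ici 0) u := by
    intro u hu
    have h := (hFd u hu).sub (hGd u hu)
    have heq : -(f u)⁻¹ -
        ((g2 u * B u - g1 u * (g3 u + 2 * g1 u * g2 u)) / (B u) ^ 2 * (f u)⁻¹
          + g1 u / B u * (-(g1 u * f u) / (f u) ^ 2))
        = -((f u)⁻¹ * (2 * (g2 u) ^ 2 - g1 u * g3 u) / (B u) ^ 2) := by
      have hB0 : B u ≠ 0 := (hBpos u hu).ne'
      have hf0 : f u ≠ 0 := hfne u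
      field_simp
      ring
    rw [heq] at h; exact h
  have hGcont : ContinuousOn G (Set.Ici 0) := fun u hu => (hGd u hu).continuousWithinAt
  have hφcont : ContinuousOn φ (Set.Ici 0) := hFcont.sub hGcont
  -- φ is strictly antitone on Ici 0
  have hφanti : StrictAntiOn φ (Set.Ici 0) := by
    apply strictAntiOn_of_hasDerivWithinAt_neg (convex_Ici 0) hφcont
      (f' := fun u => -((f u)⁻¹ * (2 * (g2 u) ^ 2 - g1 u * g3 u) / (B u) ^ 2))
      (fun x hx => (hφd x (interior_subset hx)).mono interior_subset)
    intro x hx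
    have hx' : x ∈ Set.Ici (0:ℝ) := interior_subset hx
    have h1 : 0 < (f x)⁻¹ := inv_pos.2 (hfpos x)
    have h2 : 0 < 2 * (g2 x) ^ 2 - g1 x * g3 x := (hcond x hx').2.2.2
    have h3 : 0 < (B x) ^ 2 := pow_pos (hBpos x hx') 2
    have : 0 < (f x)⁻¹ * (2 * (g2 x) ^ 2 - g1 x * g3 x) / (B x) ^ 2 :=
      div_pos (mul_pos h1 h2) h3
    linarith
  -- φ tends to 0 at infinity
  have hFlim : Tendsto (Fint f) atTop (nhds 0) := by
    have h1 := MeasureTheory.intervalIntegral_tendsto_integral_Ioi 0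
      (hint 0 Set.self_mem_Ici) tendsto_id
    have h2 : Tendsto (fun u => Fint f 0 - ∫ t in (0:ℝ)..u, (f t)⁻¹) atTop
        (nhds (Fint f 0 - ∫ t in Set.Ioi (0:ℝ), (f t)⁻¹)) := tendsto_const_nhds.sub h1
    rw [show Fint f 0 - ∫ t in Set.Ioi (0:ℝ), (f t)⁻¹ = 0 by rw [Fint]; ring] at h2
    apply h2.congr'
    filter_upwards [eventually_ge_atTop (0:ℝ)] with u hu
    exact (hFrep u hu).symm
  have hGlim : Tendsto G atTop (nhds 0) := by
    apply squeeze_zero' (g := fun u => c⁻¹ * (Real.exp (-g 0) * Real.exp (-(c * u))))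
    · filter_upwards [eventually_ge_atTop (0:ℝ)] with u hu
      exact le_of_lt (mul_pos (div_pos (hg1pos u hu) (hBpos u hu)) (inv_pos.2 (hfpos u)))
    · filter_upwards [eventually_ge_atTop (0:ℝ)] with u hu
      have h1 : g1 u / B u ≤ c⁻¹ := by
        have hg1u := hg1pos u hu
        have hg1c := hg1lb u hu
        have hBu := hBpos u hu
        have hsq : g1 u ^ 2 ≤ B u := by
          have := hg2pos u hu; simp only [hBdef]; linarith
        rw [div_le_iff₀ hBu, inv_mul_eq_div, le_div_iff₀ hc]
        nlinarith
      have h2 := hinvbd u hu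
      have h3 : (0:ℝ) < (f u)⁻¹ := inv_pos.2 (hfpos u)
      calc g1 u / B u * (f u)⁻¹ ≤ c⁻¹ * (f u)⁻¹ := by
            apply mul_le_mul_of_nonneg_right h1 h3.le
        _ ≤ c⁻¹ * (Real.exp (-g 0) * Real.exp (-(c * u))) := by
            apply mul_le_mul_of_nonneg_left h2 (inv_pos.2 hc).le
    · have : Tendsto (fun u : ℝ => Real.exp (-(c * u))) atTop (nhds 0) := by
        apply Real.tendsto_exp_atBot.comp
        exact tendsto_neg_atBot_iff.2 ((tendsto_const_mul_atTop_of_pos hc).2 tendsto_id)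
      simpa using (this.const_mul (c⁻¹ * Real.exp (-g 0))).congr (by intro x; ring)
  have hφlim : Tendsto φ atTop (nhds 0) := by
    simpa using hFlim.sub hGlim
  -- φ is nonnegative, hence positive, on Ici 0
  have hφnonneg : ∀ v ∈ Set.Ici (0:ℝ), 0 ≤ φ v := by
    intro v hv
    apply le_of_tendsto hφlim
    filter_upwards [eventually_ge_atTop v] with w hw
    rcases eq_or_lt_of_le hw with h | h
    · rw [h]
    · exact le_of_lt (hφanti hv (le_trans hv hw) h)
  have hφpos : ∀ u ∈ Set.Ici (0:ℝ), 0 < φ u := by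
    intro u hu
    have hu' : (0:ℝ) ≤ u := hu
    have hmem : u + 1 ∈ Set.Ici (0:ℝ) := Set.mem_Ici.2 (by linarith)
    have h1 : φ (u + 1) < φ u := hφanti hu hmem (by linarith)
    have h2 := hφnonneg (u + 1) hmem
    linarith
  -- the key positivity
  have hkeypos : ∀ u : ℝ, 0 ≤ u → 0 < dIci (dIci f) u * Fint f u - dIci f u / f u := by
    intro u hu
    rw [hdf2 u hu, hdf u hu]
    have hφu := hφpos u hu
    simp only [hφdef, hGdef] at hφu
    have hB0 : 0 < B u := hBpos u hu
    have hf0 : 0 < f u := hfpos u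
    have hg10 : 0 < g1 u := hg1pos u hu
    have h1 : g1 u / B u * (f u)⁻¹ < Fint f u := by linarith
    have h2 : g1 u * f u / f u = g1 u := by
      rw [mul_div_assoc, div_self (hfne u), mul_one]
    rw [h2]
    have h3 : g1 u < B u * f u * Fint f u := by
      have hlt := mul_lt_mul_of_pos_left h1 (mul_pos hB0 hf0)
      have e : B u * f u * (g1 u / B u * (f u)⁻¹) = g1 u := by
        field_simp
      rw [e] at hlt
      exact hlt
    linarith
  constructor
  · -- strict monotonicity
    apply strictMonoOn_of_hasDerivWithinAt_pos (convex_Ici 0)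
      (f' := fun u => B u * f u * Fint f u - g1 u)
    · -- continuity
      apply ContinuousOn.mul _ hFcont
      exact ContinuousOn.congr ((hg1sm.continuousOn).mul hfcont) (fun v hv => hdf v hv)
    · intro x hx
      have hx' : x ∈ Set.Ici (0:ℝ) := interior_subset hx
      have h := (hdfd x hx').mul (hFd x hx')
      have heq : B x * f x * Fint f x + dIci f x * -(f x)⁻¹
          = B x * f x * Fint f x - g1 x := by
        have hxx : g1 x * f x * (f x)⁻¹ = g1 x := by
          rw [mul_assoc, mul_inv_cancel₀ (hfne x), mul_one]
        rw [hdf x hx', mul_neg, hxx]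
        ring
      rw [heq] at h
      exact h.mono interior_subset
    · intro x hx
      have hx' : x ∈ Set.Ici (0:ℝ) := interior_subset hx
      have := hkeypos x hx'
      rw [hdf2 x hx', hdf x hx'] at this
      have h2 : g1 x * f x / f x = g1 x := by
        rw [mul_div_assoc, div_self (hfne x), mul_one]
      rw [h2] at this
      exact this
  · exact hkeypos
end

section
/- Let g satisfy condition (g) and set f = e^g. For y ≥ −log F(0), let η(y) be the unique u ≥ 0 with F(u) = e^{−y}, and define h(y) = 1 − f'(η(y))·F(η(y)). Then h is twice differentiable, h'(y) < 0, and h''(y) ≥ 4·h'(y) for all y ≥ −log F(0); equivalently h''(y)/h'(y) ≤ 4. -/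
open Set MeasureTheory Filter Topology

namespace HWork

variable {g f : ℝ → ℝ}

lemma l_p (hg : ConditionG g) {u : ℝ} (hu : 0 ≤ u) :
    HasDerivWithinAt g (dIci g u) (Set.Ici 0) u :=
  ((hg.1.differentiableOn (by norm_num)) u hu).hasDerivWithinAt

lemma l_cdp (hg : ConditionG g) : ContDiffOn ℝ 2 (dIci g) (Set.Ici 0) :=
  hg.1.derivWithin (uniqueDiffOn_Ici 0) (by norm_num)

lemma l_cdq (hg : ConditionG g) : ContDiffOn ℝ 1 (dIci (dIci g)) (Set.Ici 0) :=
  (l_cdp hg).derivWithin (uniqueDiffOn_Ici 0) (by norm_num)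

lemma l_q (hg : ConditionG g) {u : ℝ} (hu : 0 ≤ u) :
    HasDerivWithinAt (dIci g) (dIci (dIci g) u) (Set.Ici 0) u :=
  (((l_cdp hg).differentiableOn (by norm_num)) u hu).hasDerivWithinAt

lemma l_r (hg : ConditionG g) {u : ℝ} (hu : 0 ≤ u) :
    HasDerivWithinAt (dIci (dIci g)) (dIci (dIci (dIci g)) u) (Set.Ici 0) u :=
  (((l_cdq hg).differentiableOn (by norm_num)) u hu).hasDerivWithinAt

lemma l_contg (hg : ConditionG g) : ContinuousOn g (Set.Ici 0) := hg.1.continuousOn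

lemma l_ppos (hg : ConditionG g) {u : ℝ} (hu : 0 ≤ u) : 0 < dIci g u := (hg.2 u hu).1
lemma l_qpos (hg : ConditionG g) {u : ℝ} (hu : 0 ≤ u) : 0 < dIci (dIci g) u := (hg.2 u hu).2.1
lemma l_qlep (hg : ConditionG g) {u : ℝ} (hu : 0 ≤ u) :
    dIci (dIci g) u ≤ (dIci g u) ^ 2 := by have := (hg.2 u hu).2.2.1; linarith
lemma l_rless (hg : ConditionG g) {u : ℝ} (hu : 0 ≤ u) :
    dIci g u * dIci (dIci (dIci g)) u < 2 * (dIci (dIci g) u) ^ 2 := by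
  have := (hg.2 u hu).2.2.2; linarith

lemma l_pmono (hg : ConditionG g) : MonotoneOn (dIci g) (Set.Ici 0) := by
  refine monotoneOn_of_hasDerivWithinAt_nonneg (convex_Ici 0)
    ((l_cdp hg).continuousOn) (f' := dIci (dIci g)) ?_ ?_ <;> rw [interior_Ici]
  · exact fun x hx => (l_q hg (le_of_lt hx)).mono Ioi_subset_Ici_self
  · exact fun x hx => (l_qpos hg (le_of_lt hx)).le

lemma l_pge (hg : ConditionG g) {u : ℝ} (hu : 0 ≤ u) : dIci g 0 ≤ dIci g u :=
  l_pmono hg self_mem_Ici hu hu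

/-- linear growth of `g` -/
lemma l_glb (hg : ConditionG g) {u s : ℝ} (hu : 0 ≤ u) (hs : u ≤ s) :
    g u + dIci g 0 * (s - u) ≤ g s := by
  have hmono : MonotoneOn (fun x => g x - dIci g 0 * x) (Set.Ici 0) := by
    refine monotoneOn_of_hasDerivWithinAt_nonneg (convex_Ici 0)
      ((l_contg hg).sub (continuousOn_const.mul continuousOn_id))
      (f' := fun x => dIci g x - dIci g 0) ?_ ?_ <;> rw [interior_Ici]
    · intro x hx
      exact ((l_p hg (le_of_lt hx)).sub
        (((hasDerivWithinAt_id x _).const_mul (dIci g 0)).congr_deriv (by ring))).mono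
        Ioi_subset_Ici_self
    · exact fun x hx => sub_nonneg.2 (l_pge hg (le_of_lt hx))
  have := hmono hu (hu.trans hs) hs
  simp only at this
  nlinarith [l_pge hg hu]

lemma l_fpos (hf : ∀ u : ℝ, f u = Real.exp (g u)) (u : ℝ) : 0 < f u := by
  rw [hf]; exact Real.exp_pos _

lemma l_contf (hg : ConditionG g) (hf : ∀ u : ℝ, f u = Real.exp (g u)) :
    ContinuousOn f (Set.Ici 0) := by
  have : ContinuousOn (fun u => Real.exp (g u)) (Set.Ici 0) :=
    Real.continuous_exp.comp_continuousOn (l_contg hg)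
  exact this.congr fun u _ => hf u

lemma l_continv (hg : ConditionG g) (hf : ∀ u : ℝ, f u = Real.exp (g u)) :
    ContinuousOn (fun s => (f s)⁻¹) (Set.Ici 0) :=
  (l_contf hg hf).inv₀ fun u _ => (l_fpos hf u).ne'

lemma l_int (hg : ConditionG g) (hf : ∀ u : ℝ, f u = Real.exp (g u)) {u : ℝ} (hu : 0 ≤ u) :
    IntegrableOn (fun s => (f s)⁻¹) (Set.Ioi u) := by
  have hc : 0 < dIci g 0 := l_ppos hg le_rfl
  refine ((exp_neg_integrableOn_Ioi u hc).const_mul (Real.exp (-g 0))).mono' ?_ ?_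
  · exact ((l_continv hg hf).mono (Ioi_subset_Ici hu)).aestronglyMeasurable measurableSet_Ioi
  · rw [ae_restrict_iff' measurableSet_Ioi]
    refine ae_of_all _ fun s hs => ?_
    have hs0 : (0:ℝ) ≤ s := hu.trans (le_of_lt hs)
    have hgs : g 0 + dIci g 0 * (s - 0) ≤ g s := l_glb hg le_rfl hs0
    have : (f s)⁻¹ = Real.exp (-g s) := by rw [hf, ← Real.exp_neg]
    rw [Real.norm_eq_abs, this, abs_of_pos (Real.exp_pos _), ← Real.exp_add]
    exact Real.exp_le_exp.2 (by linarith)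

lemma l_Fpos (hg : ConditionG g) (hf : ∀ u : ℝ, f u = Real.exp (g u)) {u : ℝ} (hu : 0 ≤ u) :
    0 < Fint f u := by
  rw [Fint, setIntegral_pos_iff_support_of_nonneg_ae]
  · have : Function.support (fun s => (f s)⁻¹) = Set.univ := by
      ext s; simp [Function.support, (l_fpos hf s).ne']
    rw [this, Set.univ_inter, Real.volume_Ioi]
    exact ENNReal.zero_lt_top
  · refine (ae_restrict_iff' measurableSet_Ioi).2 (ae_of_all _ fun s _ => ?_)
    exact inv_nonneg.2 (l_fpos hf s).le
  · exact l_int hg hf hu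

lemma l_Fsplit (hg : ConditionG g) (hf : ∀ u : ℝ, f u = Real.exp (g u)) {u v : ℝ}
    (hu : 0 ≤ u) (huv : u ≤ v) :
    Fint f u = (∫ s in u..v, (f s)⁻¹) + Fint f v := by
  have hIoi : Set.Ioi u = Set.Ioc u v ∪ Set.Ioi v := (Set.Ioc_union_Ioi_eq_Ioi huv).symm
  rw [Fint, hIoi, setIntegral_union (Set.Ioc_disjoint_Ioi le_rfl) measurableSet_Ioi
      ((l_int hg hf hu).mono_set Set.Ioc_subset_Ioi_self) (l_int hg hf (hu.trans huv)),
    intervalIntegral.integral_of_le huv]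
  rfl


lemma l_FTCpart (hg : ConditionG g) (hf : ∀ u : ℝ, f u = Real.exp (g u)) {u : ℝ} (hu : 0 ≤ u) :
    HasDerivWithinAt (fun x => ∫ s in (0:ℝ)..x, (f s)⁻¹) ((f u)⁻¹) (Set.Ici 0) u := by
  have hii : IntervalIntegrable (fun s => (f s)⁻¹) volume 0 u := by
    rw [intervalIntegrable_iff_integrableOn_Ioc_of_le hu]
    exact (l_int hg hf le_rfl).mono_set Set.Ioc_subset_Ioi_self
  rcases eq_or_lt_of_le hu with rfl | hu'
  · exact intervalIntegral.integral_hasDerivWithinAt_right hii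
      (((l_continv hg hf).mono Ioi_subset_Ici_self).stronglyMeasurableAtFilter_nhdsWithin
        measurableSet_Ioi 0)
      (((l_continv hg hf).continuousWithinAt self_mem_Ici).mono Ioi_subset_Ici_self)
  · have hmem : Set.Ioi (0:ℝ) ∈ nhds u := Ioi_mem_nhds hu'
    refine (intervalIntegral.integral_hasDerivAt_right hii ?_ ?_).hasDerivWithinAt
    · have := ((l_continv hg hf).mono Ioi_subset_Ici_self).stronglyMeasurableAtFilter_nhdsWithin
        (μ := volume) measurableSet_Ioi u
      rwa [nhdsWithin_eq_nhds.2 hmem] at this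
    · have := ((l_continv hg hf).continuousWithinAt (le_of_lt hu' : (0:ℝ) ≤ u)).mono
        Ioi_subset_Ici_self
      rwa [ContinuousWithinAt, nhdsWithin_eq_nhds.2 hmem] at this

lemma l_F' (hg : ConditionG g) (hf : ∀ u : ℝ, f u = Real.exp (g u)) {u : ℝ} (hu : 0 ≤ u) :
    HasDerivWithinAt (Fint f) (-(f u)⁻¹) (Set.Ici 0) u := by
  have h1 : HasDerivWithinAt (fun x => Fint f 0 - ∫ s in (0:ℝ)..x, (f s)⁻¹)
      (-(f u)⁻¹) (Set.Ici 0) u := by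
    exact ((hasDerivWithinAt_const u (Set.Ici 0) (Fint f 0)).sub (l_FTCpart hg hf hu)).congr_deriv (zero_sub _)
  refine h1.congr (fun x hx => ?_) ?_
  · rw [l_Fsplit hg hf le_rfl hx]; ring
  · rw [l_Fsplit hg hf le_rfl hu]; ring

lemma l_contF (hg : ConditionG g) (hf : ∀ u : ℝ, f u = Real.exp (g u)) :
    ContinuousOn (Fint f) (Set.Ici 0) := fun u hu => (l_F' hg hf hu).continuousWithinAt

lemma l_Fanti (hg : ConditionG g) (hf : ∀ u : ℝ, f u = Real.exp (g u)) :
    StrictAntiOn (Fint f) (Set.Ici 0) := by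
  refine strictAntiOn_of_hasDerivWithinAt_neg (convex_Ici 0) (l_contF hg hf)
    (f' := fun u => -(f u)⁻¹) ?_ ?_ <;> rw [interior_Ici]
  · exact fun x hx => (l_F' hg hf (le_of_lt hx)).mono Ioi_subset_Ici_self
  · exact fun x hx => neg_neg_iff_pos.2 (inv_pos.2 (l_fpos hf x))

lemma l_expdecay (hg : ConditionG g) :
    Tendsto (fun v => Real.exp (-g 0) * Real.exp (-(dIci g 0 * v))) atTop (𝓝 0) := by
  have hc : 0 < dIci g 0 := l_ppos hg le_rfl
  have h1 : Tendsto (fun v : ℝ => dIci g 0 * v) atTop atTop :=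
    Tendsto.const_mul_atTop hc tendsto_id
  have h2 : Tendsto (fun v : ℝ => Real.exp (-(dIci g 0 * v))) atTop (𝓝 0) :=
    Real.tendsto_exp_neg_atTop_nhds_zero.comp h1
  simpa using h2.const_mul (Real.exp (-g 0))

lemma l_expg0 (hg : ConditionG g) : Tendsto (fun v => Real.exp (-g v)) atTop (𝓝 0) := by
  refine squeeze_zero' (Eventually.of_forall fun v => (Real.exp_pos _).le) ?_ (l_expdecay hg)
  filter_upwards [eventually_ge_atTop (0:ℝ)] with v hv
  rw [← Real.exp_add]
  refine Real.exp_le_exp.2 ?_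
  have := l_glb hg le_rfl hv
  linarith

lemma l_F0 (hg : ConditionG g) (hf : ∀ u : ℝ, f u = Real.exp (g u)) :
    Tendsto (Fint f) atTop (𝓝 0) := by
  have h1 : Tendsto (fun u => ∫ s in (0:ℝ)..u, (f s)⁻¹) atTop (𝓝 (Fint f 0)) :=
    intervalIntegral_tendsto_integral_Ioi 0 (l_int hg hf le_rfl) tendsto_id
  have h2 : Tendsto (fun u => Fint f 0 - ∫ s in (0:ℝ)..u, (f s)⁻¹) atTop (𝓝 0) := by
    simpa using (tendsto_const_nhds (x := Fint f 0)).sub h1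
  refine h2.congr' ?_
  filter_upwards [eventually_ge_atTop (0:ℝ)] with v hv
  rw [l_Fsplit hg hf le_rfl hv]; ring

/-- generic helper: continuous on `[0,∞)`, strictly negative one-sided derivative, tends to 0
at infinity, implies positive. -/
lemma decreasing_to_zero_pos {U : ℝ → ℝ} (hcont : ContinuousOn U (Set.Ici 0))
    (hder : ∀ x ∈ Set.Ioi (0:ℝ), ∃ d, HasDerivWithinAt U d (Set.Ioi 0) x ∧ d < 0)
    (htend : Tendsto U atTop (𝓝 0)) {u : ℝ} (hu : 0 ≤ u) : 0 < U u := by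
  choose d hd hdneg using hder
  have hanti : StrictAntiOn U (Set.Ici 0) := by
    refine strictAntiOn_of_hasDerivWithinAt_neg (convex_Ici 0) hcont
      (f' := fun x => if hx : x ∈ Set.Ioi (0:ℝ) then d x hx else 0) ?_ ?_ <;>
      rw [interior_Ici]
    · intro x hx; simpa only [dif_pos hx] using hd x hx
    · intro x hx; simpa only [dif_pos hx] using hdneg x hx
  have h1 : (0:ℝ) ≤ U (u + 1) := by
    refine le_of_tendsto htend ?_
    filter_upwards [eventually_ge_atTop (u + 1)] with v hv
    exact hanti.antitoneOn (mem_Ici.2 (by linarith)) (mem_Ici.2 (by linarith)) hv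
  have h2 : U (u + 1) < U u := hanti hu (mem_Ici.2 (by linarith)) (lt_add_one u)
  linarith



noncomputable def Zf (f : ℝ → ℝ) (u : ℝ) : ℝ := f u * Fint f u

lemma l_Zpos (hg : ConditionG g) (hf : ∀ u : ℝ, f u = Real.exp (g u)) {u : ℝ} (hu : 0 ≤ u) :
    0 < Zf f u := mul_pos (l_fpos hf u) (l_Fpos hg hf hu)

lemma l_f' (hg : ConditionG g) (hf : ∀ u : ℝ, f u = Real.exp (g u)) {u : ℝ} (hu : 0 ≤ u) :
    HasDerivWithinAt f (f u * dIci g u) (Set.Ici 0) u := by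
  have h : HasDerivWithinAt (fun v => Real.exp (g v)) (Real.exp (g u) * dIci g u)
      (Set.Ici 0) u := (l_p hg hu).exp
  rw [hf u]
  exact h.congr (fun v _ => hf v) (hf u)

lemma l_dIcif (hg : ConditionG g) (hf : ∀ u : ℝ, f u = Real.exp (g u)) {u : ℝ} (hu : 0 ≤ u) :
    dIci f u = f u * dIci g u :=
  (l_f' hg hf hu).derivWithin (uniqueDiffOn_Ici 0 u hu)

lemma l_Z' (hg : ConditionG g) (hf : ∀ u : ℝ, f u = Real.exp (g u)) {u : ℝ} (hu : 0 ≤ u) :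
    HasDerivWithinAt (Zf f) (dIci g u * Zf f u - 1) (Set.Ici 0) u := by
  have h := (l_f' hg hf hu).mul (l_F' hg hf hu)
  have heq : f u * dIci g u * Fint f u + f u * -(f u)⁻¹ = dIci g u * Zf f u - 1 := by
    rw [Zf]; field_simp [(l_fpos hf u).ne']; ring
  rw [← heq]
  exact h

lemma l_expg' (hg : ConditionG g) {x : ℝ} (hx : 0 ≤ x) :
    HasDerivWithinAt (fun v => Real.exp (-g v)) (Real.exp (-g x) * -dIci g x)
      (Set.Ici 0) x := by
  have h : HasDerivWithinAt (fun v => -g v) (-dIci g x) (Set.Ici 0) x := (l_p hg hx).neg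
  exact h.exp

lemma l_contp (hg : ConditionG g) : ContinuousOn (dIci g) (Set.Ici 0) := (l_cdp hg).continuousOn
lemma l_contq (hg : ConditionG g) : ContinuousOn (dIci (dIci g)) (Set.Ici 0) :=
  (l_cdq hg).continuousOn
lemma l_contexpg (hg : ConditionG g) : ContinuousOn (fun v => Real.exp (-g v)) (Set.Ici 0) :=
  Real.continuous_exp.comp_continuousOn (l_contg hg).neg

/-- key inequality 1 : `p · Z < 1` -/
lemma l_pZlt (hg : ConditionG g) (hf : ∀ u : ℝ, f u = Real.exp (g u)) {u : ℝ} (hu : 0 ≤ u) :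
    dIci g u * Zf f u < 1 := by
  set U : ℝ → ℝ := fun v => Real.exp (-g v) / dIci g v - Fint f v with hU
  have hUpos : 0 < U u := by
    refine decreasing_to_zero_pos ?_ ?_ ?_ hu
    · exact ((l_contexpg hg).div (l_contp hg) fun x hx => (l_ppos hg hx).ne').sub
        (l_contF hg hf)
    · intro x hx
      have hx0 : (0:ℝ) ≤ x := hx.le
      have hP : 0 < dIci g x := l_ppos hg hx0
      have hder := (((l_expg' hg hx0).div (l_q hg hx0) hP.ne').sub
        (l_F' hg hf hx0)).mono Ioi_subset_Ici_self
      refine ⟨_, hder, ?_⟩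
      have hfx : (f x)⁻¹ = Real.exp (-g x) := by rw [hf, ← Real.exp_neg]
      rw [hfx]
      have hQ : 0 < dIci (dIci g) x := l_qpos hg hx0
      have hE : 0 < Real.exp (-g x) := Real.exp_pos _
      have key : (Real.exp (-g x) * -dIci g x * dIci g x -
          Real.exp (-g x) * dIci (dIci g) x) / dIci g x ^ 2 - -Real.exp (-g x)
          = -(Real.exp (-g x) * dIci (dIci g) x) / dIci g x ^ 2 := by
        field_simp
        ring
      rw [key]
      apply div_neg_of_neg_of_pos
      · nlinarith
      · positivity
    · have hc : 0 < dIci g 0 := l_ppos hg le_rfl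
      have h1 : Tendsto (fun v => Real.exp (-g v) / dIci g v) atTop (𝓝 0) := by
        refine squeeze_zero' ?_ ?_ (by simpa using (l_expg0 hg).mul_const (dIci g 0)⁻¹)
        · filter_upwards [eventually_ge_atTop (0:ℝ)] with v hv
          exact le_of_lt (div_pos (Real.exp_pos _) (l_ppos hg hv))
        · filter_upwards [eventually_ge_atTop (0:ℝ)] with v hv
          rw [div_eq_mul_inv]
          have h2 : (dIci g v)⁻¹ ≤ (dIci g 0)⁻¹ :=
            inv_anti₀ hc (l_pge hg hv)
          exact mul_le_mul_of_nonneg_left h2 (Real.exp_pos _).le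
      simpa using h1.sub (l_F0 hg hf)
  have h1 : Fint f u < Real.exp (-g u) / dIci g u := by rw [hU] at hUpos; simp at hUpos; linarith
  have hP : 0 < dIci g u := l_ppos hg hu
  have h2 : Fint f u * dIci g u < Real.exp (-g u) := (lt_div_iff₀ hP).1 h1
  have h3 := mul_lt_mul_of_pos_right h2 (Real.exp_pos (g u))
  rw [← Real.exp_add, neg_add_cancel, Real.exp_zero] at h3
  rw [Zf, hf]
  nlinarith [h3]

/-- key inequality 2 : `p < (p² + q) Z` -/
lemma l_pltZ (hg : ConditionG g) (hf : ∀ u : ℝ, f u = Real.exp (g u)) {u : ℝ} (hu : 0 ≤ u) :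
    dIci g u < ((dIci g u) ^ 2 + dIci (dIci g) u) * Zf f u := by
  set c : ℝ → ℝ := fun v => (dIci g v) ^ 2 + dIci (dIci g) v with hcdef
  have hcpos : ∀ x : ℝ, 0 ≤ x → 0 < c x := fun x hx => by
    have := l_ppos hg hx; have := l_qpos hg hx; positivity
  set W : ℝ → ℝ := fun v => Fint f v - dIci g v / c v * Real.exp (-g v) with hW
  have hWpos : 0 < W u := by
    refine decreasing_to_zero_pos ?_ ?_ ?_ hu
    · exact (l_contF hg hf).sub (((l_contp hg).div
        (((l_contp hg).pow 2).add (l_contq hg)) fun x hx => (hcpos x hx).ne').mul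
        (l_contexpg hg))
    · intro x hx
      have hx0 : (0:ℝ) ≤ x := hx.le
      have hP : 0 < dIci g x := l_ppos hg hx0
      have hQ : 0 < dIci (dIci g) x := l_qpos hg hx0
      have hE : 0 < Real.exp (-g x) := Real.exp_pos _
      have hcx : 0 < c x := hcpos x hx0
      have hc' : HasDerivWithinAt c (2 * dIci g x * dIci (dIci g) x + dIci (dIci (dIci g)) x)
          (Set.Ici 0) x := by
        have h1 : HasDerivWithinAt (fun v => (dIci g v) ^ 2)
            (2 * dIci g x * dIci (dIci g) x) (Set.Ici 0) x := by
          have := (l_q hg hx0).pow 2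
          exact this.congr_deriv (by ring)
        exact h1.add (l_r hg hx0)
      have hder := ((l_F' hg hf hx0).sub
        (((l_q hg hx0).div hc' hcx.ne').mul (l_expg' hg hx0))).mono Ioi_subset_Ici_self
      refine ⟨_, hder, ?_⟩
      have hfx : (f x)⁻¹ = Real.exp (-g x) := by rw [hf, ← Real.exp_neg]
      rw [hfx]
      set P := dIci g x
      set Q := dIci (dIci g) x
      set R := dIci (dIci (dIci g)) x
      have hrless : P * R < 2 * Q ^ 2 := l_rless hg hx0
      have key : -Real.exp (-g x) -
          ((Q * c x - P * (2 * P * Q + R)) / c x ^ 2 * Real.exp (-g x) +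
            P / c x * (Real.exp (-g x) * -P))
          = Real.exp (-g x) * (P * R - 2 * Q ^ 2) / c x ^ 2 := by
        have hcxe : c x = P ^ 2 + Q := rfl
        have hcx0 : P ^ 2 + Q ≠ 0 := hcxe ▸ hcx.ne'
        rw [hcxe]
        field_simp
        ring
      rw [show (dIci g / c) x = P / c x from rfl, key]
      apply div_neg_of_neg_of_pos
      · nlinarith
      · positivity
    · have hc0 : 0 < dIci g 0 := l_ppos hg le_rfl
      have h1 : Tendsto (fun v => dIci g v / c v * Real.exp (-g v)) atTop (𝓝 0) := by
        refine squeeze_zero' ?_ ?_ (by simpa using (l_expg0 hg).const_mul (dIci g 0)⁻¹)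
        · filter_upwards [eventually_ge_atTop (0:ℝ)] with v hv
          exact le_of_lt (mul_pos (div_pos (l_ppos hg hv) (hcpos v hv)) (Real.exp_pos _))
        · filter_upwards [eventually_ge_atTop (0:ℝ)] with v hv
          have hP : 0 < dIci g v := l_ppos hg hv
          have hQ : 0 < dIci (dIci g) v := l_qpos hg hv
          have h2 : dIci g v / c v ≤ (dIci g 0)⁻¹ := by
            rw [div_le_iff₀ (hcpos v hv), inv_mul_eq_div, le_div_iff₀ hc0]
            simp only [hcdef]
            nlinarith [mul_le_mul_of_nonneg_left (l_pge hg hv) hP.le]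
          exact mul_le_mul_of_nonneg_right h2 (Real.exp_pos _).le
      simpa using (l_F0 hg hf).sub h1
  have h1 : dIci g u / c u * Real.exp (-g u) < Fint f u := by
    rw [hW] at hWpos; simp at hWpos; linarith
  have hP : 0 < dIci g u := l_ppos hg hu
  have hcu : 0 < c u := hcpos u hu
  have h2 : dIci g u * Real.exp (-g u) < Fint f u * c u := by
    rw [div_mul_eq_mul_div, div_lt_iff₀ hcu] at h1
    linarith
  have h3 := mul_lt_mul_of_pos_right h2 (Real.exp_pos (g u))
  have h4 : dIci g u * Real.exp (-g u) * Real.exp (g u) = dIci g u := by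
    rw [mul_assoc, ← Real.exp_add, neg_add_cancel, Real.exp_zero, mul_one]
  rw [h4] at h3
  simp only [hcdef] at h3
  rw [Zf, hf]
  nlinarith [h3]

noncomputable def Kf (g f : ℝ → ℝ) (u : ℝ) : ℝ :=
  dIci g u * Zf f u - ((dIci g u) ^ 2 + dIci (dIci g) u) * (Zf f u) ^ 2

noncomputable def K'f (g f : ℝ → ℝ) (u : ℝ) : ℝ :=
  -dIci g u + (3 * (dIci g u) ^ 2 + 3 * dIci (dIci g) u) * Zf f u
    - (dIci (dIci (dIci g)) u + 4 * dIci g u * dIci (dIci g) u + 2 * (dIci g u) ^ 3)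
      * (Zf f u) ^ 2

lemma l_c' (hg : ConditionG g) {x : ℝ} (hx : 0 ≤ x) :
    HasDerivWithinAt (fun v => (dIci g v) ^ 2 + dIci (dIci g) v)
      (2 * dIci g x * dIci (dIci g) x + dIci (dIci (dIci g)) x) (Set.Ici 0) x := by
  have h1 : HasDerivWithinAt (fun v => (dIci g v) ^ 2)
      (2 * dIci g x * dIci (dIci g) x) (Set.Ici 0) x := by
    have := (l_q hg hx).pow 2
    exact this.congr_deriv (by ring)
  exact h1.add (l_r hg hx)

lemma l_K' (hg : ConditionG g) (hf : ∀ u : ℝ, f u = Real.exp (g u)) {u : ℝ} (hu : 0 ≤ u) :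
    HasDerivWithinAt (Kf g f) (K'f g f u) (Set.Ici 0) u := by
  have h1 := (l_q hg hu).mul (l_Z' hg hf hu)
  have h3 := (l_Z' hg hf hu).pow 2
  have h := h1.sub ((l_c' hg hu).mul h3)
  have heq : dIci (dIci g) u * Zf f u + dIci g u * (dIci g u * Zf f u - 1) -
      ((2 * dIci g u * dIci (dIci g) u + dIci (dIci (dIci g)) u) * Zf f u ^ 2 +
        ((dIci g u) ^ 2 + dIci (dIci g) u) *
          ((2 : ℕ) * Zf f u ^ (2 - 1) * (dIci g u * Zf f u - 1))) = K'f g f u := by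
    rw [K'f]; push_cast; ring
  rw [← heq]
  exact h.congr (fun v _ => by rw [Kf]; rfl) (by rw [Kf]; rfl)

lemma l_H' (hg : ConditionG g) (hf : ∀ u : ℝ, f u = Real.exp (g u)) {u : ℝ} (hu : 0 ≤ u) :
    HasDerivWithinAt (fun v => 1 - dIci f v * Fint f v)
      (dIci g u - ((dIci g u) ^ 2 + dIci (dIci g) u) * Zf f u) (Set.Ici 0) u := by
  have hfp : HasDerivWithinAt (fun v => f v * dIci g v)
      (f u * dIci g u * dIci g u + f u * dIci (dIci g) u) (Set.Ici 0) u :=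
    (l_f' hg hf hu).mul (l_q hg hu)
  have h := (hasDerivWithinAt_const u (Set.Ici (0:ℝ)) (1:ℝ)).sub (hfp.mul (l_F' hg hf hu))
  have heq : (0 : ℝ) - ((f u * dIci g u * dIci g u + f u * dIci (dIci g) u) * Fint f u +
      f u * dIci g u * -(f u)⁻¹) =
      dIci g u - ((dIci g u) ^ 2 + dIci (dIci g) u) * Zf f u := by
    rw [Zf]; field_simp [(l_fpos hf u).ne']; ring
  rw [← heq]
  refine h.congr (fun v hv => ?_) ?_
  · rw [l_dIcif hg hf hv]; rfl
  · rw [l_dIcif hg hf hu]; rfl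

lemma l_Kneg (hg : ConditionG g) (hf : ∀ u : ℝ, f u = Real.exp (g u)) {u : ℝ} (hu : 0 ≤ u) :
    Kf g f u < 0 := by
  have h := mul_lt_mul_of_pos_right (l_pltZ hg hf hu) (l_Zpos hg hf hu)
  rw [Kf]
  nlinarith [h]

lemma l_ineq (hg : ConditionG g) (hf : ∀ u : ℝ, f u = Real.exp (g u)) {u : ℝ} (hu : 0 ≤ u) :
    4 * Kf g f u ≤ K'f g f u * Zf f u := by
  set P := dIci g u with hPdef
  set Q := dIci (dIci g) u with hQdef
  set R := dIci (dIci (dIci g)) u with hRdef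
  set Z := Zf f u with hZdef
  have hP : 0 < P := l_ppos hg hu
  have hQ : 0 < Q := l_qpos hg hu
  have hZ : 0 < Z := l_Zpos hg hf hu
  have h1 : P * Z < 1 := l_pZlt hg hf hu
  have h2 : P < (P ^ 2 + Q) * Z := l_pltZ hg hf hu
  have hq : Q ≤ P ^ 2 := l_qlep hg hu
  have hr : P * R < 2 * Q ^ 2 := l_rless hg hu
  have hψ : 0 ≤ -5 * P + 7 * (P ^ 2 + Q) * Z - (R + 4 * P * Q + 2 * P ^ 3) * Z ^ 2 := by
    rcases le_or_gt (R + 4 * P * Q + 2 * P ^ 3) 0 with hR | hR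
    · nlinarith [mul_nonpos_of_nonpos_of_nonneg hR (sq_nonneg Z)]
    · have ht2 : (P ^ 2 + Q) * Z < 2 * P := by
        nlinarith [mul_le_mul_of_nonneg_right hq hZ.le]
      have hPR : P * (R + 4 * P * Q + 2 * P ^ 3) < 2 * (P ^ 2 + Q) ^ 2 := by nlinarith
      have h5 : 0 < (5 * P - 2 * ((P ^ 2 + Q) * Z)) * ((P ^ 2 + Q) * Z - P) :=
        mul_pos (by nlinarith) (by nlinarith)
      have h6 : P * ((R + 4 * P * Q + 2 * P ^ 3) * Z ^ 2) < 2 * ((P ^ 2 + Q) * Z) ^ 2 := by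
        have := mul_lt_mul_of_pos_right hPR (pow_pos hZ 2)
        nlinarith [this]
      have h7 : 0 < P * (-5 * P + 7 * (P ^ 2 + Q) * Z - (R + 4 * P * Q + 2 * P ^ 3) * Z ^ 2) := by
        nlinarith [h5, h6]
      nlinarith [h7]
  have hKK : K'f g f u * Z - 4 * Kf g f u =
      Z * (-5 * P + 7 * (P ^ 2 + Q) * Z - (R + 4 * P * Q + 2 * P ^ 3) * Z ^ 2) := by
    rw [Kf, K'f, ← hPdef, ← hQdef, ← hRdef, ← hZdef]; ring
  nlinarith [mul_nonneg hZ.le hψ, hKK]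

lemma l_Ymem (hg : ConditionG g) (hf : ∀ u : ℝ, f u = Real.exp (g u)) {u : ℝ} (hu : 0 ≤ u) :
    -Real.log (Fint f 0) ≤ -Real.log (Fint f u) := by
  have h0 : 0 < Fint f u := l_Fpos hg hf hu
  have h1 : Fint f u ≤ Fint f 0 := (l_Fanti hg hf).antitoneOn self_mem_Ici hu hu
  exact neg_le_neg (Real.log_le_log h0 h1)

variable {η : ℝ → ℝ}

lemma l_etaY (hg : ConditionG g) (hf : ∀ u : ℝ, f u = Real.exp (g u))
    (hη : ∀ y : ℝ, -Real.log (Fint f 0) ≤ y → 0 ≤ η y ∧ Fint f (η y) = Real.exp (-y))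
    {u : ℝ} (hu : 0 ≤ u) : η (-Real.log (Fint f u)) = u := by
  obtain ⟨h1, h2⟩ := hη _ (l_Ymem hg hf hu)
  rw [neg_neg, Real.exp_log (l_Fpos hg hf hu)] at h2
  exact (l_Fanti hg hf).injOn h1 hu h2

lemma l_etamono (hg : ConditionG g) (hf : ∀ u : ℝ, f u = Real.exp (g u))
    (hη : ∀ y : ℝ, -Real.log (Fint f 0) ≤ y → 0 ≤ η y ∧ Fint f (η y) = Real.exp (-y)) :
    StrictMonoOn η (Set.Ici (-Real.log (Fint f 0))) := by
  intro y hy z hz hyz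
  by_contra hcon
  push_neg at hcon
  have h1 := hη y hy
  have h2 := hη z hz
  have h3 := (l_Fanti hg hf).antitoneOn h2.1 h1.1 hcon
  rw [h1.2, h2.2] at h3
  have h4 := Real.exp_lt_exp.2 (neg_lt_neg hyz)
  linarith

lemma l_etacont (hg : ConditionG g) (hf : ∀ u : ℝ, f u = Real.exp (g u))
    (hη : ∀ y : ℝ, -Real.log (Fint f 0) ≤ y → 0 ≤ η y ∧ Fint f (η y) = Real.exp (-y))
    {y : ℝ} (hy : -Real.log (Fint f 0) ≤ y) :
    ContinuousWithinAt η (Set.Ici (-Real.log (Fint f 0))) y := by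
  have hmono := l_etamono hg hf hη
  have hright : ContinuousWithinAt η (Set.Ici y) y := by
    refine hmono.continuousWithinAt_right_of_exists_between
      (mem_of_superset self_mem_nhdsWithin (Ici_subset_Ici.2 hy)) ?_
    intro b hb
    have hb0 : 0 ≤ b := le_of_lt (lt_of_le_of_lt (hη y hy).1 hb)
    exact ⟨-Real.log (Fint f b), l_Ymem hg hf hb0,
      by rw [l_etaY hg hf hη hb0]; exact ⟨hb, le_rfl⟩⟩
  rcases eq_or_lt_of_le hy with rfl | hy'
  · exact hright
  · have hleft : ContinuousWithinAt η (Set.Iic y) y := by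
      refine hmono.continuousWithinAt_left_of_exists_between ?_ ?_
      · exact mem_nhdsWithin.2 ⟨Set.Ioi (-Real.log (Fint f 0)), isOpen_Ioi, hy',
          fun z hz => mem_Ici.2 (le_of_lt hz.1)⟩
      · intro b hb
        have hηy : 0 < η y := by
          have h0 : η (-Real.log (Fint f 0)) = 0 := by
            have := l_etaY hg hf hη (le_refl 0); simpa using this
          rw [← h0]
          exact hmono self_mem_Ici (mem_Ici.2 hy) hy'
        have hb'0 : (0:ℝ) ≤ max b 0 := le_max_right _ _
        have hb'lt : max b 0 < η y := max_lt hb hηy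
        exact ⟨-Real.log (Fint f (max b 0)), l_Ymem hg hf hb'0,
          by rw [l_etaY hg hf hη hb'0]; exact ⟨le_max_left _ _, hb'lt⟩⟩
    exact (hleft.union hright).mono fun z _ => (le_total z y).imp id id

lemma l_Y' (hg : ConditionG g) (hf : ∀ u : ℝ, f u = Real.exp (g u)) {u : ℝ} (hu : 0 ≤ u) :
    HasDerivWithinAt (fun v => -Real.log (Fint f v)) ((f u)⁻¹ / Fint f u) (Set.Ici 0) u := by
  have h := ((l_F' hg hf hu).log (l_Fpos hg hf hu).ne').neg
  exact h.congr_deriv (by ring)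

lemma l_eta' (hg : ConditionG g) (hf : ∀ u : ℝ, f u = Real.exp (g u))
    (hη : ∀ y : ℝ, -Real.log (Fint f 0) ≤ y → 0 ≤ η y ∧ Fint f (η y) = Real.exp (-y))
    {y : ℝ} (hy : -Real.log (Fint f 0) ≤ y) :
    HasDerivWithinAt η (f (η y) * Fint f (η y)) (Set.Ici (-Real.log (Fint f 0))) y := by
  obtain ⟨hu0, hFu⟩ := hη y hy
  have hfu : 0 < f (η y) := l_fpos hf (η y)
  have hFpos : 0 < Fint f (η y) := l_Fpos hg hf hu0
  have hY'pos : 0 < (f (η y))⁻¹ / Fint f (η y) := div_pos (inv_pos.2 hfu) hFpos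
  rw [hasDerivWithinAt_iff_tendsto_slope]
  have hslopeY : Tendsto (slope (fun v => -Real.log (Fint f v)) (η y))
      (𝓝[Set.Ici 0 \ {η y}] (η y)) (𝓝 ((f (η y))⁻¹ / Fint f (η y))) :=
    hasDerivWithinAt_iff_tendsto_slope.1 (l_Y' hg hf hu0)
  have hmapsto : Tendsto η (𝓝[Set.Ici (-Real.log (Fint f 0)) \ {y}] y)
      (𝓝[Set.Ici 0 \ {η y}] (η y)) := by
    rw [tendsto_nhdsWithin_iff]
    constructor
    · exact ((l_etacont hg hf hη hy).tendsto).mono_left (nhdsWithin_mono _ diff_subset)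
    · filter_upwards [self_mem_nhdsWithin] with z hz
      refine ⟨(hη z hz.1).1, fun hcontra => hz.2 ?_⟩
      exact (l_etamono hg hf hη).injOn hz.1 (mem_Ici.2 hy) hcontra
  have hcomp : Tendsto (fun z => (slope (fun v => -Real.log (Fint f v)) (η y) (η z))⁻¹)
      (𝓝[Set.Ici (-Real.log (Fint f 0)) \ {y}] y) (𝓝 (((f (η y))⁻¹ / Fint f (η y))⁻¹)) :=
    (hslopeY.comp hmapsto).inv₀ hY'pos.ne'
  have hval : ((f (η y))⁻¹ / Fint f (η y))⁻¹ = f (η y) * Fint f (η y) := by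
    field_simp
  rw [← hval]
  refine hcomp.congr' ?_
  filter_upwards [self_mem_nhdsWithin] with z hz
  have hz1 := hη z hz.1
  have hYz : -Real.log (Fint f (η z)) = z := by rw [hz1.2, Real.log_exp, neg_neg]
  have hYy : -Real.log (Fint f (η y)) = y := by rw [hFu, Real.log_exp, neg_neg]
  rw [slope_def_field, slope_def_field, hYz, hYy, inv_div]

end HWork

open HWork in
/-- If `g` satisfies condition (g), `f = e^g`, `η(y)` is the (unique) `u ≥ 0`
with `F(u) = e^{-y}` and `h(y) = 1 - f'(η(y)) F(η(y))`, then `h` is twice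
differentiable on `[-log F(0), ∞)`, with `h' < 0` and `h'' ≥ 4 h'` there. -/
theorem h_twice_differentiable_deriv_neg_ratio_le_four
    (g : ℝ → ℝ) (hg : ConditionG g)
    (f : ℝ → ℝ) (hf : ∀ u : ℝ, f u = Real.exp (g u))
    (η : ℝ → ℝ)
    (hη : ∀ y : ℝ, -Real.log (Fint f 0) ≤ y →
      0 ≤ η y ∧ Fint f (η y) = Real.exp (-y))
    (h : ℝ → ℝ)
    (hh : ∀ y : ℝ, h y = 1 - dIci f (η y) * Fint f (η y)) :
    ∀ y : ℝ, -Real.log (Fint f 0) ≤ y →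
      DifferentiableWithinAt ℝ h (Set.Ici (-Real.log (Fint f 0))) y ∧
      DifferentiableWithinAt ℝ (derivWithin h (Set.Ici (-Real.log (Fint f 0))))
        (Set.Ici (-Real.log (Fint f 0))) y ∧
      derivWithin h (Set.Ici (-Real.log (Fint f 0))) y < 0 ∧
      4 * derivWithin h (Set.Ici (-Real.log (Fint f 0))) y ≤
        derivWithin (derivWithin h (Set.Ici (-Real.log (Fint f 0))))
          (Set.Ici (-Real.log (Fint f 0))) y := by
  intro y hy
  have hD : ∀ z, -Real.log (Fint f 0) ≤ z →
      HasDerivWithinAt h (Kf g f (η z)) (Set.Ici (-Real.log (Fint f 0))) z := by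
    intro z hz
    have hu0 : 0 ≤ η z := (hη z hz).1
    have hcomp := (l_H' hg hf hu0).comp z (l_eta' hg hf hη hz)
      (fun w hw => (hη w hw).1)
    have heq : (dIci g (η z) - ((dIci g (η z)) ^ 2 + dIci (dIci g) (η z)) * Zf f (η z)) *
        (f (η z) * Fint f (η z)) = Kf g f (η z) := by
      rw [Kf, Zf]; ring
    rw [← heq]
    exact hcomp.congr (fun w _ => by rw [hh w]; rfl) (by rw [hh z]; rfl)
  have hd1 : ∀ z, z ∈ Set.Ici (-Real.log (Fint f 0)) →
      derivWithin h (Set.Ici (-Real.log (Fint f 0))) z = Kf g f (η z) := fun z hz =>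
    (hD z hz).derivWithin (uniqueDiffOn_Ici _ z hz)
  have hu0 : 0 ≤ η y := (hη y hy).1
  have hD2 : HasDerivWithinAt (derivWithin h (Set.Ici (-Real.log (Fint f 0))))
      (K'f g f (η y) * (f (η y) * Fint f (η y))) (Set.Ici (-Real.log (Fint f 0))) y := by
    have hcomp := (l_K' hg hf hu0).comp y (l_eta' hg hf hη hy) (fun w hw => (hη w hw).1)
    exact hcomp.congr (fun z hz => hd1 z hz) (hd1 y hy)
  refine ⟨(hD y hy).differentiableWithinAt, hD2.differentiableWithinAt, ?_, ?_⟩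
  · rw [hd1 y hy]
    exact l_Kneg hg hf hu0
  · rw [hd1 y hy, hD2.derivWithin (uniqueDiffOn_Ici _ y hy)]
    simpa [Zf] using l_ineq hg hf hu0
end

section
/- Let g ∈ C²([0,∞)) with g'(u) > 0 and g''(u) > 0 for all u ≥ 0, and set f = e^g. Then ∫₀^∞ ds/f(s) < ∞, and for every u ≥ 0 one has the identity f'(u)·F(u) = 1 − g'(u)·e^{g(u)}·∫_u^∞ e^{−g(s)}·(g''(s)/g'(s)²) ds; in particular f'(u)·F(u) < 1 for all u ≥ 0. -/
/-- If `g ∈ C²([0,∞))` with `g' > 0` and `g'' > 0`, and `f = e^g`, then `1/f`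
is integrable on `(0,∞)` and
`f'(u) F(u) = 1 - g'(u) e^{g(u)} ∫_u^∞ e^{-g(s)} (g''(s)/g'(s)²) ds < 1`
for all `u ≥ 0`. -/
theorem fp_mul_Fint_identity_lt_one
    (g : ℝ → ℝ)
    (hg : ContDiffOn ℝ 2 g (Set.Ici 0))
    (h1 : ∀ u : ℝ, 0 ≤ u → 0 < dIci g u)
    (h2 : ∀ u : ℝ, 0 ≤ u → 0 < dIci (dIci g) u)
    (f : ℝ → ℝ) (hf : ∀ u : ℝ, f u = Real.exp (g u)) :
    MeasureTheory.IntegrableOn (fun s => (f s)⁻¹) (Set.Ioi 0) ∧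
    ∀ u : ℝ, 0 ≤ u →
      dIci f u * Fint f u
        = 1 - dIci g u * Real.exp (g u) *
            ∫ s in Set.Ioi u, Real.exp (-g s) * (dIci (dIci g) s / (dIci g s) ^ 2) ∧
      dIci f u * Fint f u < 1 := by
  have hfeq : f = fun x => Real.exp (g x) := funext hf
  subst hfeq
  set G : ℝ → ℝ := dIci g with hGdef
  set H : ℝ → ℝ := dIci G with hHdef
  have huD : UniqueDiffOn ℝ (Set.Ici (0:ℝ)) := uniqueDiffOn_Ici 0
  have hgd : DifferentiableOn ℝ g (Set.Ici 0) := hg.differentiableOn two_ne_zero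
  have hG1 : ContDiffOn ℝ 1 G (Set.Ici 0) := hg.derivWithin huD (by norm_num)
  have hGc : ContinuousOn G (Set.Ici 0) := hG1.continuousOn
  have hgc : ContinuousOn g (Set.Ici 0) := hg.continuousOn
  -- derivatives at interior points
  have hgderiv : ∀ s : ℝ, 0 < s → HasDerivAt g (G s) s := by
    intro s hs
    have hmem : Set.Ici (0:ℝ) ∈ nhds s := Ici_mem_nhds hs
    have hda : DifferentiableAt ℝ g s := (hg.contDiffAt hmem).differentiableAt two_ne_zero
    have : G s = deriv g s := derivWithin_of_mem_nhds hmem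
    rw [this]; exact hda.hasDerivAt
  have hGderiv : ∀ s : ℝ, 0 < s → HasDerivAt G (H s) s := by
    intro s hs
    have hmem : Set.Ici (0:ℝ) ∈ nhds s := Ici_mem_nhds hs
    have hda : DifferentiableAt ℝ G s := (hG1.contDiffAt hmem).differentiableAt one_ne_zero
    have : H s = deriv G s := derivWithin_of_mem_nhds hmem
    rw [this]; exact hda.hasDerivAt
  -- G is monotone on [0, ∞)
  have hGmono : MonotoneOn G (Set.Ici 0) := by
    apply monotoneOn_of_deriv_nonneg (convex_Ici 0) hGc
    · intro x hx
      rw [interior_Ici] at hx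
      exact (hGderiv x hx).differentiableAt.differentiableWithinAt
    · intro x hx
      rw [interior_Ici] at hx
      rw [(hGderiv x hx).deriv]
      exact (h2 x hx.le).le
  have hG0 : 0 < G 0 := h1 0 le_rfl
  -- linear lower bound for g
  have hlin : ∀ s : ℝ, 0 ≤ s → g 0 + G 0 * s ≤ g s := by
    intro s hs
    have hmono : MonotoneOn (fun x => g x - G 0 * x) (Set.Ici 0) := by
      apply monotoneOn_of_deriv_nonneg (convex_Ici 0)
        (hgc.sub (continuousOn_const.mul continuousOn_id))
      · intro x hx
        rw [interior_Ici] at hx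
        exact ((hgderiv x hx).sub
          ((hasDerivAt_id x).const_mul (G 0))).differentiableAt.differentiableWithinAt
      · intro x hx
        rw [interior_Ici] at hx
        have hd : HasDerivAt (fun x => g x - G 0 * x) (G x - G 0 * 1) x :=
          (hgderiv x hx).sub ((hasDerivAt_id x).const_mul (G 0))
        change 0 ≤ deriv (fun x => g x - G 0 * x) x
        rw [hd.deriv]
        have := hGmono Set.self_mem_Ici (Set.mem_Ici.2 hx.le) hx.le
        linarith
    have := hmono Set.self_mem_Ici (Set.mem_Ici.2 hs) hs
    simp only [mul_zero, sub_zero] at this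
    linarith
  -- the key FTC computation on (u, ∞)
  have key : ∀ u : ℝ, 0 ≤ u →
      MeasureTheory.IntegrableOn (fun s => Real.exp (-g s) * (1 + H s / (G s) ^ 2))
        (Set.Ioi u) ∧
      (∫ s in Set.Ioi u, Real.exp (-g s) * (1 + H s / (G s) ^ 2))
        = Real.exp (-g u) / G u := by
    intro u hu
    set φ : ℝ → ℝ := fun s => -Real.exp (-g s) * (G s)⁻¹ with hφdef
    have hφderiv : ∀ s ∈ Set.Ioi u, HasDerivAt φ
        (Real.exp (-g s) * (1 + H s / (G s) ^ 2)) s := by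
      intro s hs
      have hs0 : 0 < s := lt_of_le_of_lt hu hs
      have hGs : 0 < G s := h1 s hs0.le
      have d1 : HasDerivAt (fun x => -Real.exp (-g x)) (Real.exp (-g s) * G s) s := by
        have := ((hgderiv s hs0).neg).exp.neg
        have e : (fun x => -Real.exp (-g x)) = -fun x => Real.exp ((-g) x) := by
          funext x; simp
        rw [e]
        exact this.congr_deriv (by simp)
      have d2 : HasDerivAt (fun x => (G x)⁻¹) (-(H s) / G s ^ 2) s :=
        (hGderiv s hs0).inv hGs.ne'
      have := d1.mul d2
      have e : φ = (fun x => -Real.exp (-g x)) * (fun x => (G x)⁻¹) := rfl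
      rw [e]
      have hGne : G s ≠ 0 := hGs.ne'
      exact this.congr_deriv (by rw [mul_assoc, mul_inv_cancel₀ hGne]; ring)
    have hφcont : ContinuousWithinAt φ (Set.Ici u) u := by
      have hc : ContinuousOn φ (Set.Ici 0) := by
        apply ContinuousOn.mul
        · exact ((hgc.neg).rexp).neg
        · exact hGc.inv₀ (fun x hx => (h1 x hx).ne')
      exact (hc u hu).mono (Set.Ici_subset_Ici.2 hu)
    have hnn : ∀ s ∈ Set.Ioi u, 0 ≤ Real.exp (-g s) * (1 + H s / (G s) ^ 2) := by
      intro s hs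
      have hs0 : 0 < s := lt_of_le_of_lt hu hs
      have hH : 0 < H s := h2 s hs0.le
      have hG : 0 < G s := h1 s hs0.le
      positivity
    have htend : Filter.Tendsto φ Filter.atTop (nhds 0) := by
      have hbnd : Filter.Tendsto (fun s : ℝ => -(Real.exp (-g 0) / G 0 * Real.exp (-(G 0 * s))))
          Filter.atTop (nhds 0) := by
        have h1' : Filter.Tendsto (fun s : ℝ => G 0 * s) Filter.atTop Filter.atTop :=
          Filter.Tendsto.const_mul_atTop hG0 Filter.tendsto_id
        have h2' : Filter.Tendsto (fun s : ℝ => Real.exp (-(G 0 * s))) Filter.atTop (nhds 0) :=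
          Real.tendsto_exp_neg_atTop_nhds_zero.comp h1'
        have := (h2'.const_mul (Real.exp (-g 0) / G 0)).neg
        simpa using this
      apply tendsto_of_tendsto_of_tendsto_of_le_of_le' hbnd tendsto_const_nhds
      · filter_upwards [Filter.eventually_ge_atTop (0:ℝ)] with s hs
        have hGs : G 0 ≤ G s := hGmono Set.self_mem_Ici (Set.mem_Ici.2 hs) hs
        have hGs0 : 0 < G s := h1 s hs
        have hexp : Real.exp (-g s) ≤ Real.exp (-g 0) * Real.exp (-(G 0 * s)) := by
          rw [← Real.exp_add]
          apply Real.exp_le_exp.2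
          have := hlin s hs
          linarith
        have hdiv : Real.exp (-g s) / G s ≤
            Real.exp (-g 0) / G 0 * Real.exp (-(G 0 * s)) := by
          rw [div_mul_eq_mul_div, div_le_div_iff₀ hGs0 hG0] at *
          calc Real.exp (-g s) * G 0 ≤ (Real.exp (-g 0) * Real.exp (-(G 0 * s))) * G 0 := by
                exact mul_le_mul_of_nonneg_right hexp hG0.le
            _ ≤ (Real.exp (-g 0) * Real.exp (-(G 0 * s))) * G s := by
                exact mul_le_mul_of_nonneg_left hGs (by positivity)
        simp only [hφdef, neg_mul]
        rw [neg_le_neg_iff]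
        calc Real.exp (-g s) * (G s)⁻¹ = Real.exp (-g s) / G s := by
              rw [div_eq_mul_inv]
          _ ≤ _ := hdiv
      · filter_upwards [Filter.eventually_ge_atTop (0:ℝ)] with s hs
        have hGs0 : 0 < G s := h1 s hs
        simp only [hφdef, neg_mul]
        have : 0 ≤ Real.exp (-g s) * (G s)⁻¹ := by positivity
        linarith
    refine ⟨MeasureTheory.integrableOn_Ioi_deriv_of_nonneg hφcont hφderiv hnn htend, ?_⟩
    rw [MeasureTheory.integral_Ioi_of_hasDerivAt_of_nonneg hφcont hφderiv hnn htend]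
    simp only [hφdef]
    field_simp
    ring
  -- integrability of the two pieces
  have hmeas : ∀ u : ℝ, 0 ≤ u →
      MeasureTheory.AEStronglyMeasurable (fun s => Real.exp (-g s))
        (MeasureTheory.volume.restrict (Set.Ioi u)) := by
    intro u hu
    exact (((hgc.mono (Set.Ioi_subset_Ici hu)).neg).rexp).aestronglyMeasurable
      measurableSet_Ioi
  have hP : ∀ u : ℝ, 0 ≤ u →
      MeasureTheory.IntegrableOn (fun s => Real.exp (-g s)) (Set.Ioi u) := by
    intro u hu
    refine ((key u hu).1).mono' (hmeas u hu) ?_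
    rw [MeasureTheory.ae_restrict_iff' measurableSet_Ioi]
    filter_upwards with s hs
    have hs0 : 0 < s := lt_of_le_of_lt hu hs
    have hH : 0 < H s := h2 s hs0.le
    have hG : 0 < G s := h1 s hs0.le
    rw [Real.norm_eq_abs, abs_of_pos (Real.exp_pos _)]
    nlinarith [Real.exp_pos (-g s), div_pos hH (pow_pos hG 2)]
  have hQmeas : ∀ u : ℝ, 0 ≤ u →
      MeasureTheory.AEStronglyMeasurable (fun s => Real.exp (-g s) * (H s / (G s) ^ 2))
        (MeasureTheory.volume.restrict (Set.Ioi u)) := by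
    intro u hu
    have hHc : ContinuousOn H (Set.Ici 0) :=
      hG1.continuousOn_derivWithin huD le_rfl
    have hcQ : ContinuousOn (fun s => Real.exp (-g s) * (H s / (G s) ^ 2)) (Set.Ici 0) := by
      apply ContinuousOn.mul ((hgc.neg).rexp)
      exact hHc.div (hGc.pow 2) (fun x hx => by have := h1 x hx; positivity)
    exact (hcQ.mono (Set.Ioi_subset_Ici hu)).aestronglyMeasurable measurableSet_Ioi
  have hQ : ∀ u : ℝ, 0 ≤ u →
      MeasureTheory.IntegrableOn (fun s => Real.exp (-g s) * (H s / (G s) ^ 2))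
        (Set.Ioi u) := by
    intro u hu
    refine ((key u hu).1).mono' (hQmeas u hu) ?_
    rw [MeasureTheory.ae_restrict_iff' measurableSet_Ioi]
    filter_upwards with s hs
    have hs0 : 0 < s := lt_of_le_of_lt hu hs
    have hH : 0 < H s := h2 s hs0.le
    have hG : 0 < G s := h1 s hs0.le
    rw [Real.norm_eq_abs, abs_of_pos (by positivity)]
    nlinarith [Real.exp_pos (-g s)]
  constructor
  · -- integrability of 1/f
    have := hP 0 le_rfl
    refine this.congr_fun ?_ measurableSet_Ioi
    intro s _
    simp [Real.exp_neg]
  · intro u hu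
    have hGu : 0 < G u := h1 u hu
    -- sum of the integrals
    have hsum : (∫ s in Set.Ioi u, Real.exp (-g s))
        + (∫ s in Set.Ioi u, Real.exp (-g s) * (H s / (G s) ^ 2))
        = Real.exp (-g u) / G u := by
      rw [← MeasureTheory.integral_add (hP u hu) (hQ u hu), ← (key u hu).2]
      congr 1
      funext s
      ring
    -- identify Fint
    have hFint : Fint (fun x => Real.exp (g x)) u = ∫ s in Set.Ioi u, Real.exp (-g s) := by
      unfold Fint
      congr 1
      funext s
      rw [Real.exp_neg]
    -- compute dIci f
    have hfd : dIci (fun x => Real.exp (g x)) u = Real.exp (g u) * G u := by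
      have hgw : HasDerivWithinAt g (G u) (Set.Ici 0) u :=
        (hgd u hu).hasDerivWithinAt
      exact (hgw.exp).derivWithin (huD u hu)
    -- positivity of the second integral
    have hI2pos : 0 < ∫ s in Set.Ioi u, Real.exp (-g s) * (H s / (G s) ^ 2) := by
      rw [MeasureTheory.setIntegral_pos_iff_support_of_nonneg_ae ?_ (hQ u hu)]
      · have hsub : Set.Ioi u ⊆
            Function.support (fun s => Real.exp (-g s) * (H s / (G s) ^ 2)) ∩ Set.Ioi u := by
          intro s hs
          have hs0 : 0 < s := lt_of_le_of_lt hu hs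
          have hH : 0 < H s := h2 s hs0.le
          have hG : 0 < G s := h1 s hs0.le
          refine ⟨?_, hs⟩
          simp only [Function.mem_support]
          positivity
        calc (0 : ENNReal) < ⊤ := by simp
          _ = MeasureTheory.volume (Set.Ioi u) := (Real.volume_Ioi).symm
          _ ≤ _ := MeasureTheory.measure_mono hsub
      · apply MeasureTheory.ae_restrict_of_forall_mem measurableSet_Ioi
        intro s hs
        simp only [Pi.zero_apply]
        have hs0 : 0 < s := lt_of_le_of_lt hu hs
        have hH : 0 < H s := h2 s hs0.le
        have hG : 0 < G s := h1 s hs0.le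
        positivity
    rw [hfd, hFint]
    have hexp : Real.exp (g u) * Real.exp (-g u) = 1 := by
      rw [← Real.exp_add]; simp
    have e1 : Real.exp (g u) * G u * (Real.exp (-g u) / G u) = 1 := by
      rw [Real.exp_neg]
      field_simp
    constructor
    · have h1' : (∫ s in Set.Ioi u, Real.exp (-g s))
          = Real.exp (-g u) / G u
            - ∫ s in Set.Ioi u, Real.exp (-g s) * (H s / (G s) ^ 2) := by
        linarith
      rw [h1', mul_sub, e1]
      ring
    · have h1' : (∫ s in Set.Ioi u, Real.exp (-g s))
          < Real.exp (-g u) / G u := by linarith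
      calc Real.exp (g u) * G u * ∫ s in Set.Ioi u, Real.exp (-g s)
          < Real.exp (g u) * G u * (Real.exp (-g u) / G u) :=
            mul_lt_mul_of_pos_left h1' (by positivity)
        _ = 1 := e1
end

section
/- Let y₀ ∈ ℝ and let h ∈ C²([y₀,∞)) satisfy h(y) ≥ 0, h'(y) < 0, and h''(y) ≥ 4·h'(y) for all y ≥ y₀. Let t₀ ∈ ℝ and let x ∈ C²([t₀,∞)) satisfy 4·(e^{x(t)} − 1) = h(ξ(t)) and ξ(t) ≥ y₀ for all t ≥ t₀, where ξ(t) = x(t) + 2t + log 16. Then x''(t) − 8·x'(t) + 16·(e^{x(t)} − 1) − h(ξ(t))·(x'(t) + 2)² ≥ 0 for all t ≥ t₀. -/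
/-- The transformed subsolution inequality (dimension `N = 10`, `q = 1`):
if `4(e^{x(t)} - 1) = h(ξ(t))` with `ξ(t) = x(t) + 2t + log 16 ≥ y₀`, where
`h ≥ 0`, `h' < 0` and `h'' ≥ 4 h'` on `[y₀,∞)`, then
`x'' - 8x' + 16(e^x - 1) - h(ξ)(x' + 2)² ≥ 0` on `[t₀,∞)`. -/
theorem transformed_subsolution_inequality
    (y₀ : ℝ) (h h' h'' : ℝ → ℝ)
    (hh' : ∀ y : ℝ, y₀ ≤ y → HasDerivWithinAt h (h' y) (Set.Ici y₀) y)
    (hh'' : ∀ y : ℝ, y₀ ≤ y → HasDerivWithinAt h' (h'' y) (Set.Ici y₀) y)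
    (hh''cont : ContinuousOn h'' (Set.Ici y₀))
    (hnonneg : ∀ y : ℝ, y₀ ≤ y → 0 ≤ h y)
    (hneg : ∀ y : ℝ, y₀ ≤ y → h' y < 0)
    (hconv : ∀ y : ℝ, y₀ ≤ y → 4 * h' y ≤ h'' y)
    (t₀ : ℝ) (x x' x'' : ℝ → ℝ)
    (hx' : ∀ t : ℝ, t₀ ≤ t → HasDerivWithinAt x (x' t) (Set.Ici t₀) t)
    (hx'' : ∀ t : ℝ, t₀ ≤ t → HasDerivWithinAt x' (x'' t) (Set.Ici t₀) t)
    (hx''cont : ContinuousOn x'' (Set.Ici t₀))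
    (hrel : ∀ t : ℝ, t₀ ≤ t →
      4 * (Real.exp (x t) - 1) = h (x t + 2 * t + Real.log 16))
    (hdom : ∀ t : ℝ, t₀ ≤ t → y₀ ≤ x t + 2 * t + Real.log 16) :
    ∀ t : ℝ, t₀ ≤ t →
      0 ≤ x'' t - 8 * x' t + 16 * (Real.exp (x t) - 1)
          - h (x t + 2 * t + Real.log 16) * (x' t + 2) ^ 2 := by
  set ξ : ℝ → ℝ := fun t => x t + 2 * t + Real.log 16 with hξdef
  have hmaps : Set.MapsTo ξ (Set.Ici t₀) (Set.Ici y₀) := fun u hu => hdom u hu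
  -- derivative of ξ
  have hξ' : ∀ t : ℝ, t₀ ≤ t → HasDerivWithinAt ξ (x' t + 2) (Set.Ici t₀) t := by
    intro t ht
    have := ((hx' t ht).add
      (((hasDerivWithinAt_id t (Set.Ici t₀)).const_mul 2))).add_const (Real.log 16)
    exact this.congr_deriv (by ring)
  -- first derivative identity
  have eq1 : ∀ t : ℝ, t₀ ≤ t →
      4 * (Real.exp (x t) * x' t) = h' (ξ t) * (x' t + 2) := by
    intro t ht
    have hL : HasDerivWithinAt (fun u => 4 * (Real.exp (x u) - 1))
        (4 * (Real.exp (x t) * x' t)) (Set.Ici t₀) t :=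
      ((hx' t ht).exp.sub_const 1).const_mul 4
    have hR : HasDerivWithinAt (fun u => h (ξ u))
        (h' (ξ t) * (x' t + 2)) (Set.Ici t₀) t :=
      (hh' (ξ t) (hdom t ht)).comp t (hξ' t ht) hmaps
    have hL' : HasDerivWithinAt (fun u => h (ξ u))
        (4 * (Real.exp (x t) * x' t)) (Set.Ici t₀) t :=
      hL.congr (fun u hu => (hrel u hu).symm) (hrel t ht).symm
    exact (uniqueDiffOn_Ici t₀ t ht).eq_deriv _ hL' hR
  -- second derivative identity
  have eq2 : ∀ t : ℝ, t₀ ≤ t →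
      4 * ((Real.exp (x t) * x' t) * x' t + Real.exp (x t) * x'' t)
        = h'' (ξ t) * (x' t + 2) * (x' t + 2) + h' (ξ t) * x'' t := by
    intro t ht
    have hL : HasDerivWithinAt (fun u => 4 * (Real.exp (x u) * x' u))
        (4 * ((Real.exp (x t) * x' t) * x' t + Real.exp (x t) * x'' t))
        (Set.Ici t₀) t :=
      ((hx' t ht).exp.mul (hx'' t ht)).const_mul 4
    have hR : HasDerivWithinAt (fun u => h' (ξ u) * (x' u + 2))
        ((h'' (ξ t) * (x' t + 2)) * (x' t + 2) + h' (ξ t) * x'' t)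
        (Set.Ici t₀) t := by
      have h1 : HasDerivWithinAt (fun u => h' (ξ u))
          (h'' (ξ t) * (x' t + 2)) (Set.Ici t₀) t :=
        (hh'' (ξ t) (hdom t ht)).comp t (hξ' t ht) hmaps
      have h2 : HasDerivWithinAt (fun u => x' u + 2) (x'' t) (Set.Ici t₀) t :=
        (hx'' t ht).add_const 2
      exact h1.mul h2
    have hL' : HasDerivWithinAt (fun u => h' (ξ u) * (x' u + 2))
        (4 * ((Real.exp (x t) * x' t) * x' t + Real.exp (x t) * x'' t))
        (Set.Ici t₀) t :=
      hL.congr (fun u hu => (eq1 u hu).symm) (eq1 t ht).symm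
    have := (uniqueDiffOn_Ici t₀ t ht).eq_deriv _ hL' hR
    linarith [this]
  -- main inequality
  intro t ht
  set E := Real.exp (x t) with hE
  set a := x' t with ha
  set b := x'' t with hb
  set H := h (ξ t) with hH
  set P := h' (ξ t) with hP
  set Q := h'' (ξ t) with hQ
  have e1 : 4 * (E * a) = P * (a + 2) := eq1 t ht
  have e2 : 4 * ((E * a) * a + E * b) = Q * (a + 2) * (a + 2) + P * b := eq2 t ht
  have hHval : 4 * (E - 1) = H := hrel t ht
  have hHnn : 0 ≤ H := hnonneg _ (hdom t ht)
  have hPneg : P < 0 := hneg _ (hdom t ht)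
  have hQ4P : 4 * P ≤ Q := hconv _ (hdom t ht)
  have hE1 : 1 ≤ E := by nlinarith
  have hden : 0 < 4 * E - P := by nlinarith
  have haneg : a < 0 := by nlinarith
  have hspos : 0 < a + 2 := by nlinarith
  have hslt : a + 2 < 2 := by linarith
  have key : 0 ≤ (b - 8 * a + 4 * H - H * (a + 2) ^ 2) * (4 * E - P) := by
    nlinarith [mul_pos (mul_pos hspos hspos) (neg_pos.mpr hPneg),
      mul_nonneg (mul_nonneg hHnn (le_of_lt hspos)) hden.le,
      mul_nonneg hHnn hden.le, sq_nonneg a, sq_nonneg (a + 2),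
      mul_pos (neg_pos.mpr haneg) (neg_pos.mpr hPneg),
      mul_nonneg (mul_nonneg hHnn (by nlinarith : (0:ℝ) ≤ 4 - (a+2)^2)) hden.le,
      mul_nonneg (by linarith : (0:ℝ) ≤ E) (sq_nonneg a),
      mul_le_mul_of_nonneg_right hQ4P (sq_nonneg (a + 2))]
  by_contra hcon
  push_neg at hcon
  have hc : b - 8 * a + 4 * H - H * (a + 2) ^ 2 < 0 := by nlinarith
  exact absurd key (not_le.mpr (mul_neg_of_neg_of_pos hc hden))
end

section
/- If g ∈ C³([0,∞)) satisfies condition (g) and g(0) ≥ log 2, then the function g̃ = exp∘g (that is, g̃(u) = e^{g(u)}) also satisfies condition (g), and g̃(0) ≥ 2 ≥ log 2. Consequently, by induction, if φ satisfies condition (g) with φ(0) ≥ log 2 and g₁ = φ, gₙ = exp∘g_{n−1} for n ≥ 2, then every gₙ satisfies condition (g). -/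
/-- The iterates `g₁ = φ`, `gₙ = exp ∘ g_{n-1}`; here `gseq φ n = g_{n+1}`. -/
noncomputable def gseq (φ : ℝ → ℝ) : ℕ → (ℝ → ℝ)
  | 0 => φ
  | n + 1 => fun u => Real.exp (gseq φ n u)

lemma expg_key (g : ℝ → ℝ) (hg : ConditionG g) (hg0 : Real.log 2 ≤ g 0) :
    ConditionG (fun u => Real.exp (g u)) ∧ 2 ≤ Real.exp (g 0) := by
  obtain ⟨hsm, hineq⟩ := hg
  have hUD : UniqueDiffOn ℝ (Set.Ici (0:ℝ)) := uniqueDiffOn_Ici 0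
  set g1 := dIci g with hg1def
  set g2 := dIci g1 with hg2def
  set g3 := dIci g2 with hg3def
  have hsm1 : ContDiffOn ℝ 2 g1 (Set.Ici 0) := hsm.derivWithin hUD (by norm_num)
  have hsm2 : ContDiffOn ℝ 1 g2 (Set.Ici 0) := hsm1.derivWithin hUD (by norm_num)
  have hdg : DifferentiableOn ℝ g (Set.Ici 0) := hsm.differentiableOn (by norm_num)
  have hdg1 : DifferentiableOn ℝ g1 (Set.Ici 0) := hsm1.differentiableOn (by norm_num)
  have hdg2 : DifferentiableOn ℝ g2 (Set.Ici 0) := hsm2.differentiableOn (by norm_num)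
  have Hg : ∀ u ∈ Set.Ici (0:ℝ), HasDerivWithinAt g (g1 u) (Set.Ici 0) u :=
    fun u hu => (hdg u hu).hasDerivWithinAt
  have Hg1 : ∀ u ∈ Set.Ici (0:ℝ), HasDerivWithinAt g1 (g2 u) (Set.Ici 0) u :=
    fun u hu => (hdg1 u hu).hasDerivWithinAt
  have Hg2 : ∀ u ∈ Set.Ici (0:ℝ), HasDerivWithinAt g2 (g3 u) (Set.Ici 0) u :=
    fun u hu => (hdg2 u hu).hasDerivWithinAt
  -- g is monotone on [0, ∞)
  have hmono : MonotoneOn g (Set.Ici (0:ℝ)) := by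
    apply monotoneOn_of_hasDerivWithinAt_nonneg (convex_Ici 0) (hdg.continuousOn)
      (f' := g1)
    · intro x hx
      rw [interior_Ici] at hx ⊢
      exact (Hg x (Set.mem_Ici.2 (le_of_lt hx))).mono (Set.Ioi_subset_Ici le_rfl)
    · intro x hx
      rw [interior_Ici] at hx
      exact (hineq x (le_of_lt hx)).1.le
  have hE : ∀ u ∈ Set.Ici (0:ℝ), 2 ≤ Real.exp (g u) := by
    intro u hu
    have h1 : g 0 ≤ g u := hmono (le_refl (0:ℝ)) hu hu
    have : Real.log 2 ≤ g u := le_trans hg0 h1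
    calc (2:ℝ) = Real.exp (Real.log 2) := (Real.exp_log two_pos).symm
      _ ≤ Real.exp (g u) := Real.exp_le_exp.2 this
  -- derivative formulas
  set h : ℝ → ℝ := fun u => Real.exp (g u) with hhdef
  set h1 : ℝ → ℝ := fun u => Real.exp (g u) * g1 u with hh1def
  set h2 : ℝ → ℝ := fun u => Real.exp (g u) * (g1 u ^ 2 + g2 u) with hh2def
  have HA : ∀ u ∈ Set.Ici (0:ℝ), HasDerivWithinAt h (h1 u) (Set.Ici 0) u :=
    fun u hu => (Hg u hu).exp
  have HA1 : ∀ u ∈ Set.Ici (0:ℝ), HasDerivWithinAt h1 (h2 u) (Set.Ici 0) u := by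
    intro u hu
    have := ((Hg u hu).exp).mul (Hg1 u hu)
    have heq : Real.exp (g u) * g1 u * g1 u + Real.exp (g u) * g2 u = h2 u := by
      simp only [hh2def]; ring
    rw [heq] at this
    exact this
  have HA2 : ∀ u ∈ Set.Ici (0:ℝ), HasDerivWithinAt h2
      (Real.exp (g u) * (g1 u ^ 3 + 3 * g1 u * g2 u + g3 u)) (Set.Ici 0) u := by
    intro u hu
    have hpow : HasDerivWithinAt (fun x => g1 x ^ 2 + g2 x)
        ((2 : ℕ) * g1 u ^ 1 * g2 u + g3 u) (Set.Ici 0) u :=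
      ((Hg1 u hu).pow 2).add (Hg2 u hu)
    have := ((Hg u hu).exp).mul hpow
    have heq : Real.exp (g u) * g1 u * (g1 u ^ 2 + g2 u) +
        Real.exp (g u) * ((2 : ℕ) * g1 u ^ 1 * g2 u + g3 u)
        = Real.exp (g u) * (g1 u ^ 3 + 3 * g1 u * g2 u + g3 u) := by
      push_cast; ring
    rw [heq] at this
    exact this
  have E1 : ∀ u ∈ Set.Ici (0:ℝ), dIci h u = h1 u :=
    fun u hu => (HA u hu).derivWithin (hUD u hu)
  have E2 : ∀ u ∈ Set.Ici (0:ℝ), dIci (dIci h) u = h2 u := by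
    intro u hu
    have : dIci (dIci h) u = derivWithin h1 (Set.Ici 0) u := by
      unfold dIci
      exact derivWithin_congr (fun y hy => E1 y hy) (E1 u hu)
    rw [this]
    exact (HA1 u hu).derivWithin (hUD u hu)
  have E3 : ∀ u ∈ Set.Ici (0:ℝ), dIci (dIci (dIci h)) u =
      Real.exp (g u) * (g1 u ^ 3 + 3 * g1 u * g2 u + g3 u) := by
    intro u hu
    have : dIci (dIci (dIci h)) u = derivWithin h2 (Set.Ici 0) u := by
      unfold dIci
      exact derivWithin_congr (fun y hy => E2 y hy) (E2 u hu)
    rw [this]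
    exact (HA2 u hu).derivWithin (hUD u hu)
  constructor
  · constructor
    · exact Real.contDiff_exp.comp_contDiffOn hsm
    · intro u hu
      have hu' : u ∈ Set.Ici (0:ℝ) := hu
      obtain ⟨P1, P2, P3, P4⟩ := hineq u hu
      have hE2 : 2 ≤ Real.exp (g u) := hE u hu'
      have he : 0 < Real.exp (g u) := Real.exp_pos _
      rw [E1 u hu', E2 u hu', E3 u hu']
      refine ⟨?_, ?_, ?_, ?_⟩
      · simp only [hh1def]; positivity
      · simp only [hh2def]
        have : 0 < g1 u ^ 2 + g2 u := by positivity
        positivity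
      · simp only [hh1def, hh2def]
        nlinarith [mul_nonneg (mul_nonneg he.le (by linarith : (0:ℝ) ≤ Real.exp (g u) - 2))
            (sq_nonneg (g1 u)), mul_nonneg he.le P3]
      · simp only [hh1def, hh2def]
        nlinarith [mul_pos (mul_pos he he) P4,
          mul_pos (mul_pos (mul_pos he he) (pow_pos P1 2)) P2,
          mul_nonneg (mul_nonneg he.le he.le) (pow_nonneg P1.le 4)]
  · exact hE 0 Set.self_mem_Ici

/-- If `g` satisfies condition (g) and `g(0) ≥ log 2`, then `exp ∘ g` also
satisfies condition (g) and `(exp ∘ g)(0) ≥ 2 ≥ log 2`; consequently, by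
induction, all iterates `gₙ` (with `g₁ = φ`, `gₙ = exp ∘ g_{n-1}`) of any `φ`
satisfying condition (g) with `φ(0) ≥ log 2` satisfy condition (g). -/
theorem exp_comp_preserves_conditionG
    (g : ℝ → ℝ) (hg : ConditionG g) (hg0 : Real.log 2 ≤ g 0) :
    (ConditionG (fun u => Real.exp (g u)) ∧
      2 ≤ Real.exp (g 0) ∧ Real.log 2 ≤ 2) ∧
    (∀ φ : ℝ → ℝ, ConditionG φ → Real.log 2 ≤ φ 0 →
      ∀ n : ℕ, ConditionG (gseq φ n)) := by
  have hlog2 : Real.log 2 ≤ 2 := by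
    have := Real.log_two_lt_d9
    linarith
  obtain ⟨hc, h2⟩ := expg_key g hg hg0
  refine ⟨⟨hc, h2, hlog2⟩, ?_⟩
  intro φ hφ hφ0 n
  have key : ∀ n : ℕ, ConditionG (gseq φ n) ∧ Real.log 2 ≤ gseq φ n 0 := by
    intro n
    induction n with
    | zero => exact ⟨hφ, hφ0⟩
    | succ m ih =>
      obtain ⟨ihc, ih0⟩ := ih
      obtain ⟨hc', h2'⟩ := expg_key (gseq φ m) ihc ih0
      refine ⟨hc', ?_⟩
      show Real.log 2 ≤ Real.exp (gseq φ m 0)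
      linarith
  exact (key n).1
end
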